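/- arXiv:1906.05880 — 5 statements merged into one kernel-verified Lean document; each statement's English description precedes it below -/
import Mathlib

section
/- Let γ ∈ (0,1), s < r < t, and x, y ∈ ℝ. Define J := ∫_ℝ |z|^{-γ} exp(-(1/2)((x-z)²/(t-r) + (z-y)²/(r-s))) dz. Then for every Δ > 0, J ≤ 2Δ^{1-γ}/(1-γ) + Δ^{-γ} · (2π)^{1/2} · ((t-r)(r-s)/(t-s))^{1/2} · exp(-(x-y)²/(2(t-s))). -/
open Real Set MeasureTheory

noncomputable section

lemma exp_aux (A B x y z : ℝ) (hA : 0 < A) (hB : 0 < B) :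
    -(1 / 2) * ((x - z) ^ 2 / A + (z - y) ^ 2 / B) =
      -((x - y) ^ 2) / (2 * (A + B)) +
        -((A + B) / (2 * A * B)) * (z - (B * x + A * y) / (A + B)) ^ 2 := by
  have h1 : A ≠ 0 := hA.ne'
  have h2 : B ≠ 0 := hB.ne'
  have h3 : A + B ≠ 0 := by positivity
  field_simp
  ring

lemma G_key (a b x y : ℝ) (ha : 0 < a) (hb : 0 < b) (z : ℝ) :
    Real.exp (-(1 / 2) * ((x - z) ^ 2 / a + (z - y) ^ 2 / b)) =
      Real.exp (-((x - y) ^ 2) / (2 * (a + b))) *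
        Real.exp (-((a + b) / (2 * a * b)) * (z - (b * x + a * y) / (a + b)) ^ 2) := by
  rw [← Real.exp_add]
  congr 1
  exact exp_aux a b x y z ha hb

lemma G_int (a b x y : ℝ) (ha : 0 < a) (hb : 0 < b) :
    Integrable (fun z : ℝ => Real.exp (-(1 / 2) * ((x - z) ^ 2 / a + (z - y) ^ 2 / b))) := by
  have hc : 0 < (a + b) / (2 * a * b) := by positivity
  have hgauss : Integrable
      (fun z : ℝ => Real.exp (-((a + b) / (2 * a * b)) * (z - (b * x + a * y) / (a + b)) ^ 2)) :=
    (integrable_exp_neg_mul_sq hc).comp_sub_right _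
  have hEq : (fun z : ℝ => Real.exp (-(1 / 2) * ((x - z) ^ 2 / a + (z - y) ^ 2 / b))) =
      fun z => Real.exp (-((x - y) ^ 2) / (2 * (a + b))) *
        Real.exp (-((a + b) / (2 * a * b)) * (z - (b * x + a * y) / (a + b)) ^ 2) :=
    funext (G_key a b x y ha hb)
  rw [hEq]
  exact hgauss.const_mul _

lemma G_val (a b x y : ℝ) (ha : 0 < a) (hb : 0 < b) :
    (∫ z : ℝ, Real.exp (-(1 / 2) * ((x - z) ^ 2 / a + (z - y) ^ 2 / b))) =
      Real.exp (-((x - y) ^ 2) / (2 * (a + b))) *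
        ((2 * π) ^ ((1 : ℝ) / 2) * Real.sqrt (a * b / (a + b))) := by
  have hc : 0 < (a + b) / (2 * a * b) := by positivity
  have h1 : (∫ z : ℝ, Real.exp (-(1 / 2) * ((x - z) ^ 2 / a + (z - y) ^ 2 / b))) =
      Real.exp (-((x - y) ^ 2) / (2 * (a + b))) *
        ∫ z : ℝ, Real.exp (-((a + b) / (2 * a * b)) * (z - (b * x + a * y) / (a + b)) ^ 2) := by
    simp_rw [G_key a b x y ha hb]
    rw [integral_const_mul]
  have h2 : (∫ z : ℝ,
      Real.exp (-((a + b) / (2 * a * b)) * (z - (b * x + a * y) / (a + b)) ^ 2)) =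
      Real.sqrt (π / ((a + b) / (2 * a * b))) := by
    rw [integral_sub_right_eq_self
      (fun z : ℝ => Real.exp (-((a + b) / (2 * a * b)) * z ^ 2)) ((b * x + a * y) / (a + b))]
    exact integral_gaussian _
  have h3 : π / ((a + b) / (2 * a * b)) = (2 * π) * (a * b / (a + b)) := by
    have h1' : a ≠ 0 := ha.ne'
    have h2' : b ≠ 0 := hb.ne'
    have h3' : a + b ≠ 0 := by positivity
    field_simp
  rw [h1, h2, h3, Real.sqrt_mul (by positivity), Real.sqrt_eq_rpow]

set_option maxHeartbeats 1000000 in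
/-- For γ ∈ (0,1), s < r < t and any Δ > 0, the integral
J = ∫_ℝ |z|^{-γ} exp(-(1/2)((x-z)²/(t-r) + (z-y)²/(r-s))) dz satisfies
J ≤ 2Δ^{1-γ}/(1-γ) + Δ^{-γ}·√(2π)·√((t-r)(r-s)/(t-s))·exp(-(x-y)²/(2(t-s))). -/
theorem stmt_3 (γ : ℝ) (hγ : γ ∈ Ioo (0 : ℝ) 1) (s r t x y : ℝ)
    (hsr : s < r) (hrt : r < t) (Δ : ℝ) (hΔ : 0 < Δ) :
    (∫ z : ℝ, |z| ^ (-γ) *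
        Real.exp (-(1 / 2) * ((x - z) ^ 2 / (t - r) + (z - y) ^ 2 / (r - s)))) ≤
      2 * Δ ^ (1 - γ) / (1 - γ) +
        Δ ^ (-γ) * ((2 * π) ^ ((1 : ℝ) / 2) *
          Real.sqrt ((t - r) * (r - s) / (t - s)) *
            Real.exp (-((x - y) ^ 2) / (2 * (t - s)))) := by
  obtain ⟨hγ0, hγ1⟩ := hγ
  have ha : (0:ℝ) < t - r := by linarith
  have hb : (0:ℝ) < r - s := by linarith
  have hab : (0:ℝ) < t - s := by linarith
  have hts : (t - r) + (r - s) = t - s := by ring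
  have hGint : Integrable
      (fun z : ℝ => Real.exp (-(1 / 2) * ((x - z) ^ 2 / (t - r) + (z - y) ^ 2 / (r - s)))) :=
    G_int (t - r) (r - s) x y ha hb
  have hGnonneg : ∀ z : ℝ,
      0 ≤ Real.exp (-(1 / 2) * ((x - z) ^ 2 / (t - r) + (z - y) ^ 2 / (r - s))) :=
    fun z => le_of_lt (Real.exp_pos _)
  have hGle1 : ∀ z : ℝ,
      Real.exp (-(1 / 2) * ((x - z) ^ 2 / (t - r) + (z - y) ^ 2 / (r - s))) ≤ 1 := by
    intro z
    apply Real.exp_le_one_iff.mpr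
    have h1 : 0 ≤ (x - z) ^ 2 / (t - r) := by positivity
    have h2 : 0 ≤ (z - y) ^ 2 / (r - s) := by positivity
    nlinarith
  have hGval : (∫ z : ℝ, Real.exp (-(1 / 2) * ((x - z) ^ 2 / (t - r) + (z - y) ^ 2 / (r - s)))) =
      Real.exp (-((x - y) ^ 2) / (2 * (t - s))) *
        ((2 * π) ^ ((1 : ℝ) / 2) * Real.sqrt ((t - r) * (r - s) / (t - s))) := by
    have := G_val (t - r) (r - s) x y ha hb
    rw [hts] at this
    exact this
  -- measurability of f
  have hfm : Measurable (fun z : ℝ => |z| ^ (-γ) *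
      Real.exp (-(1 / 2) * ((x - z) ^ 2 / (t - r) + (z - y) ^ 2 / (r - s)))) :=
    by fun_prop
  -- interval integrability of |z|^(-γ)
  have hI : IntervalIntegrable (fun z : ℝ => |z| ^ (-γ)) volume 0 Δ := by
    have h0 := intervalIntegral.intervalIntegrable_rpow' (show (-1:ℝ) < -γ by linarith) (a := 0) (b := Δ)
    rw [intervalIntegrable_iff_integrableOn_Ioc_of_le hΔ.le] at h0 ⊢
    exact h0.congr_fun (fun z hz => by rw [abs_of_pos hz.1]) measurableSet_Ioc
  have hIneg : IntervalIntegrable (fun z : ℝ => |z| ^ (-γ)) volume (-Δ) 0 := by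
    have h1 := (IntervalIntegrable.iff_comp_neg (by finiteness)).mp hI
    simp only [abs_neg, neg_zero] at h1
    exact h1.symm
  have hItot : IntervalIntegrable (fun z : ℝ => |z| ^ (-γ)) volume (-Δ) Δ := hIneg.trans hI
  have habs_int : IntegrableOn (fun z : ℝ => |z| ^ (-γ)) (Icc (-Δ) Δ) := by
    rw [integrableOn_Icc_iff_integrableOn_Ioc]
    exact (intervalIntegrable_iff_integrableOn_Ioc_of_le (by linarith)).mp hItot
  -- value of ∫ |z|^(-γ) over Icc (-Δ) Δ
  have hpos : (∫ z in (0:ℝ)..Δ, |z| ^ (-γ)) = Δ ^ (1 - γ) / (1 - γ) := by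
    have hEq : EqOn (fun z : ℝ => |z| ^ (-γ)) (fun z : ℝ => z ^ (-γ)) (uIcc 0 Δ) := by
      intro z hz
      rw [uIcc_of_le hΔ.le] at hz
      simp only [abs_of_nonneg hz.1]
    rw [intervalIntegral.integral_congr hEq,
      integral_rpow (Or.inl (by linarith : (-1:ℝ) < -γ)),
      Real.zero_rpow (show -γ + 1 ≠ 0 by intro h; apply hγ1.ne; linarith)]
    have hxp : -γ + 1 = 1 - γ := by ring
    rw [hxp, sub_zero]
  have hneg : (∫ z in (-Δ:ℝ)..0, |z| ^ (-γ)) = Δ ^ (1 - γ) / (1 - γ) := by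
    have h1 := intervalIntegral.integral_comp_neg (a := 0) (b := Δ) (fun z : ℝ => |z| ^ (-γ))
    simp only [abs_neg, neg_zero] at h1
    rw [← h1, hpos]
  have hval : (∫ z in Icc (-Δ) Δ, |z| ^ (-γ)) = 2 * Δ ^ (1 - γ) / (1 - γ) := by
    rw [integral_Icc_eq_integral_Ioc,
      ← intervalIntegral.integral_of_le (by linarith : (-Δ:ℝ) ≤ Δ),
      ← intervalIntegral.integral_add_adjacent_intervals hIneg hI, hpos, hneg]
    ring
  -- integrability of f
  have hSm : MeasurableSet (Icc (-Δ) Δ) := measurableSet_Icc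
  have hfnonneg : ∀ z : ℝ, 0 ≤ |z| ^ (-γ) *
      Real.exp (-(1 / 2) * ((x - z) ^ 2 / (t - r) + (z - y) ^ 2 / (r - s))) :=
    fun z => mul_nonneg (Real.rpow_nonneg (abs_nonneg z) _) (hGnonneg z)
  have hfS : IntegrableOn (fun z : ℝ => |z| ^ (-γ) *
      Real.exp (-(1 / 2) * ((x - z) ^ 2 / (t - r) + (z - y) ^ 2 / (r - s)))) (Icc (-Δ) Δ) := by
    apply Integrable.mono' habs_int hfm.aestronglyMeasurable.restrict
    filter_upwards with z
    rw [Real.norm_eq_abs, abs_of_nonneg (hfnonneg z)]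
    exact mul_le_of_le_one_right (Real.rpow_nonneg (abs_nonneg z) _) (hGle1 z)
  have hzΔ : ∀ z ∈ (Icc (-Δ) Δ)ᶜ, Δ ≤ |z| := by
    intro z hz
    by_contra h
    push_neg at h
    exact hz (mem_Icc.mpr (abs_le.mp h.le))
  have hfSc : IntegrableOn (fun z : ℝ => |z| ^ (-γ) *
      Real.exp (-(1 / 2) * ((x - z) ^ 2 / (t - r) + (z - y) ^ 2 / (r - s)))) (Icc (-Δ) Δ)ᶜ := by
    apply Integrable.mono' ((hGint.const_mul (Δ ^ (-γ))).integrableOn)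
      hfm.aestronglyMeasurable.restrict
    rw [ae_restrict_iff' hSm.compl]
    filter_upwards with z hz
    rw [Real.norm_eq_abs, abs_of_nonneg (hfnonneg z)]
    exact mul_le_mul_of_nonneg_right
      (Real.rpow_le_rpow_of_nonpos hΔ (hzΔ z hz) (by linarith)) (hGnonneg z)
  have hfint : Integrable (fun z : ℝ => |z| ^ (-γ) *
      Real.exp (-(1 / 2) * ((x - z) ^ 2 / (t - r) + (z - y) ^ 2 / (r - s)))) := by
    rw [← integrableOn_univ, ← union_compl_self (Icc (-Δ) Δ)]
    exact hfS.union hfSc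
  -- the two bounds
  have bound1 : (∫ z in Icc (-Δ) Δ, |z| ^ (-γ) *
      Real.exp (-(1 / 2) * ((x - z) ^ 2 / (t - r) + (z - y) ^ 2 / (r - s)))) ≤
      2 * Δ ^ (1 - γ) / (1 - γ) := by
    calc (∫ z in Icc (-Δ) Δ, |z| ^ (-γ) *
        Real.exp (-(1 / 2) * ((x - z) ^ 2 / (t - r) + (z - y) ^ 2 / (r - s))))
        ≤ ∫ z in Icc (-Δ) Δ, |z| ^ (-γ) :=
          setIntegral_mono_on hfS habs_int hSm (fun z _ =>
            mul_le_of_le_one_right (Real.rpow_nonneg (abs_nonneg z) _) (hGle1 z))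
      _ = 2 * Δ ^ (1 - γ) / (1 - γ) := hval
  have bound2 : (∫ z in (Icc (-Δ) Δ)ᶜ, |z| ^ (-γ) *
      Real.exp (-(1 / 2) * ((x - z) ^ 2 / (t - r) + (z - y) ^ 2 / (r - s)))) ≤
      Δ ^ (-γ) * ((2 * π) ^ ((1 : ℝ) / 2) * Real.sqrt ((t - r) * (r - s) / (t - s)) *
        Real.exp (-((x - y) ^ 2) / (2 * (t - s)))) := by
    calc (∫ z in (Icc (-Δ) Δ)ᶜ, |z| ^ (-γ) *
        Real.exp (-(1 / 2) * ((x - z) ^ 2 / (t - r) + (z - y) ^ 2 / (r - s))))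
        ≤ ∫ z in (Icc (-Δ) Δ)ᶜ, Δ ^ (-γ) *
            Real.exp (-(1 / 2) * ((x - z) ^ 2 / (t - r) + (z - y) ^ 2 / (r - s))) :=
          setIntegral_mono_on hfSc ((hGint.const_mul _).integrableOn) hSm.compl (fun z hz =>
            mul_le_mul_of_nonneg_right
              (Real.rpow_le_rpow_of_nonpos hΔ (hzΔ z hz) (by linarith)) (hGnonneg z))
      _ = Δ ^ (-γ) * ∫ z in (Icc (-Δ) Δ)ᶜ,
            Real.exp (-(1 / 2) * ((x - z) ^ 2 / (t - r) + (z - y) ^ 2 / (r - s))) :=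
          integral_const_mul _ _
      _ ≤ Δ ^ (-γ) * ∫ z : ℝ,
            Real.exp (-(1 / 2) * ((x - z) ^ 2 / (t - r) + (z - y) ^ 2 / (r - s))) := by
          apply mul_le_mul_of_nonneg_left
            (setIntegral_le_integral hGint (ae_of_all _ hGnonneg))
            (Real.rpow_nonneg hΔ.le _)
      _ = Δ ^ (-γ) * ((2 * π) ^ ((1 : ℝ) / 2) * Real.sqrt ((t - r) * (r - s) / (t - s)) *
            Real.exp (-((x - y) ^ 2) / (2 * (t - s)))) := by
          rw [hGval]; ring
  rw [← integral_add_compl hSm hfint]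
  exact add_le_add bound1 bound2
end
end

section
/- Let γ ∈ (0,1), s < r < t, and x, y ∈ ℝ. Then J(x,t,y,s;r) := ∫_ℝ |z|^{-γ} exp(-(1/2)((x-z)²/(t-r) + (z-y)²/(r-s))) dz ≤ κ₁(γ) · ((t-r)(r-s)/(t-s))^{(1-γ)/2} · exp(-(1-γ)(x-y)²/(2(t-s))), where κ₁(γ) := (2π)^{(1-γ)/2} κ(γ) (2/(1-γ))^γ and κ(γ) := (γ/(1-γ))^{1-γ} + (γ/(1-γ))^{-γ}. -/
open Real Set MeasureTheory

noncomputable section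

/-- κ(γ) := (γ/(1-γ))^{1-γ} + (γ/(1-γ))^{-γ}. -/
def kappa (γ : ℝ) : ℝ := (γ / (1 - γ)) ^ (1 - γ) + (γ / (1 - γ)) ^ (-γ)

/-- κ₁(γ) := (2π)^{(1-γ)/2} κ(γ) (2/(1-γ))^γ. -/
def kappa1 (γ : ℝ) : ℝ := (2 * π) ^ ((1 - γ) / 2) * kappa γ * (2 / (1 - γ)) ^ γ

lemma eq_of_log_eq {a b : ℝ} (ha : 0 < a) (hb : 0 < b) (h : Real.log a = Real.log b) :
    a = b := by rw [← Real.exp_log ha, h, Real.exp_log hb]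

lemma abs_rpow_ii (γ : ℝ) (hγ1 : γ < 1) (L : ℝ) (hL : 0 ≤ L) :
    IntervalIntegrable (fun z : ℝ => |z| ^ (-γ)) volume 0 L := by
  have h := intervalIntegral.intervalIntegrable_rpow' (a := 0) (b := L) (r := -γ) (by linarith)
  rw [intervalIntegrable_iff, uIoc_of_le hL] at h ⊢
  exact h.congr_fun (fun z hz => by rw [abs_of_pos hz.1]) measurableSet_Ioc

lemma abs_rpow_ii_neg (γ : ℝ) (hγ1 : γ < 1) (L : ℝ) (hL : 0 ≤ L) :
    IntervalIntegrable (fun z : ℝ => |z| ^ (-γ)) volume (-L) 0 := by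
  have h := ((IntervalIntegrable.iff_comp_neg (by simp)).mp (abs_rpow_ii γ hγ1 L hL))
  simp only [abs_neg, neg_zero] at h
  exact h.symm

lemma key (γ : ℝ) (hγ : γ ∈ Ioo (0 : ℝ) 1) (c m : ℝ) (hc : 0 < c) :
    (∫ z : ℝ, |z| ^ (-γ) * Real.exp (-(z - m) ^ 2 / (2 * c))) ≤
      (2 * π) ^ ((1 - γ) / 2) * kappa γ * (2 / (1 - γ)) ^ γ * c ^ ((1 - γ) / 2) := by
  obtain ⟨hγ0, hγ1⟩ := hγ
  have h1γ : (0:ℝ) < 1 - γ := by linarith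
  have h2π : (0:ℝ) < 2 * π := by positivity
  set L : ℝ := Real.sqrt (2 * π) * (γ / 2) * Real.sqrt c with hLdef
  have hL : 0 < L := by positivity
  set g : ℝ → ℝ := Set.indicator (Ioc (-L) L) (fun z => |z| ^ (-γ)) with hgdef
  set h : ℝ → ℝ := fun z => L ^ (-γ) * Real.exp (-(z - m) ^ 2 / (2 * c)) with hhdef
  -- integrability of g
  have hgint : Integrable g := by
    rw [hgdef, integrable_indicator_iff measurableSet_Ioc]
    have := (abs_rpow_ii_neg γ hγ1 L hL.le).trans (abs_rpow_ii γ hγ1 L hL.le)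
    rwa [intervalIntegrable_iff, uIoc_of_le (by linarith)] at this
  -- integrability of h
  have hhint : Integrable h := by
    have h0 : Integrable (fun z : ℝ => Real.exp (-(1 / (2 * c)) * z ^ 2)) :=
      integrable_exp_neg_mul_sq (by positivity)
    have h1 : Integrable (fun z : ℝ => Real.exp (-(1 / (2 * c)) * (z - m) ^ 2)) :=
      h0.comp_sub_right m
    have h2 : (fun z : ℝ => Real.exp (-(z - m) ^ 2 / (2 * c))) =
        fun z : ℝ => Real.exp (-(1 / (2 * c)) * (z - m) ^ 2) := by
      funext z; ring_nf
    exact ((h2 ▸ h1).const_mul _)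
  -- pointwise bound
  have hpt : ∀ z : ℝ, |z| ^ (-γ) * Real.exp (-(z - m) ^ 2 / (2 * c)) ≤ g z + h z := by
    intro z
    have hexp1 : Real.exp (-(z - m) ^ 2 / (2 * c)) ≤ 1 := by
      rw [Real.exp_le_one_iff]
      have := sq_nonneg (z - m)
      have : -(z - m) ^ 2 ≤ 0 := by linarith
      exact div_nonpos_of_nonpos_of_nonneg this (by positivity)
    have hh0 : 0 ≤ h z := by
      rw [hhdef]; positivity
    rcases lt_or_ge |z| L with hcase | hcase
    · have hz : z ∈ Ioc (-L) L := by
        rcases abs_lt.mp hcase with ⟨h1, h2⟩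
        exact ⟨h1, h2.le⟩
      have : g z = |z| ^ (-γ) := by rw [hgdef, Set.indicator_of_mem hz]
      rw [this]
      calc |z| ^ (-γ) * Real.exp (-(z - m) ^ 2 / (2 * c))
          ≤ |z| ^ (-γ) * 1 := by
            apply mul_le_mul_of_nonneg_left hexp1 (Real.rpow_nonneg (abs_nonneg z) _)
        _ = |z| ^ (-γ) := mul_one _
        _ ≤ |z| ^ (-γ) + h z := le_add_of_nonneg_right hh0
    · have hzg : 0 ≤ g z := by
        rw [hgdef]
        exact Set.indicator_nonneg (fun x _ => Real.rpow_nonneg (abs_nonneg x) _) z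
      have hbase : |z| ^ (-γ) ≤ L ^ (-γ) :=
        rpow_le_rpow_of_nonpos hL hcase (by linarith)
      have : |z| ^ (-γ) * Real.exp (-(z - m) ^ 2 / (2 * c)) ≤ h z := by
        rw [hhdef]
        exact mul_le_mul_of_nonneg_right hbase (Real.exp_pos _).le
      linarith
  -- integrability of integrand
  have hfint : Integrable (fun z : ℝ => |z| ^ (-γ) * Real.exp (-(z - m) ^ 2 / (2 * c))) := by
    apply Integrable.mono' (hgint.add hhint)
    · apply Measurable.aestronglyMeasurable
      fun_prop
    · filter_upwards with z
      rw [Real.norm_eq_abs, abs_of_nonneg (by positivity)]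
      exact hpt z
  -- main bound
  have hle : (∫ z : ℝ, |z| ^ (-γ) * Real.exp (-(z - m) ^ 2 / (2 * c))) ≤
      (∫ z : ℝ, g z) + ∫ z : ℝ, h z := by
    rw [← integral_add hgint hhint]
    exact integral_mono hfint (hgint.add hhint) hpt
  -- compute ∫ g
  have hg_val : (∫ z : ℝ, g z) = 2 * (L ^ (1 - γ) / (1 - γ)) := by
    rw [hgdef, integral_indicator measurableSet_Ioc,
      ← intervalIntegral.integral_of_le (by linarith : -L ≤ L),
      ← intervalIntegral.integral_add_adjacent_intervals
        (abs_rpow_ii_neg γ hγ1 L hL.le) (abs_rpow_ii γ hγ1 L hL.le)]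
    have hneg : (∫ z in (-L)..(0:ℝ), |z| ^ (-γ)) = ∫ z in (0:ℝ)..L, |z| ^ (-γ) := by
      have h0 := intervalIntegral.integral_comp_neg (a := (0:ℝ)) (b := L) (fun z => |z| ^ (-γ))
      simp only [abs_neg, neg_zero] at h0
      exact h0.symm
    have hpos : (∫ z in (0:ℝ)..L, |z| ^ (-γ)) = L ^ (1 - γ) / (1 - γ) := by
      rw [intervalIntegral.integral_congr (g := fun z : ℝ => z ^ (-γ))
        (fun z hz => by
          rw [uIcc_of_le hL.le] at hz
          simp [abs_of_nonneg hz.1]),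
        integral_rpow (Or.inl (by linarith))]
      rw [Real.zero_rpow (by linarith : -γ + 1 ≠ 0)]
      ring_nf
    rw [hneg, hpos]; ring
  -- compute ∫ h
  have hh_val : (∫ z : ℝ, h z) = L ^ (-γ) * Real.sqrt (2 * π * c) := by
    rw [hhdef, integral_const_mul]
    congr 1
    have h2 : (fun z : ℝ => Real.exp (-(z - m) ^ 2 / (2 * c))) =
        fun z : ℝ => Real.exp (-(1 / (2 * c)) * (z - m) ^ 2) := by
      funext z; ring_nf
    rw [h2, integral_sub_right_eq_self (fun z : ℝ => Real.exp (-(1 / (2 * c)) * z ^ 2)) m,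
      integral_gaussian]
    congr 1
    field_simp
  -- log of L
  have hγne : (γ:ℝ) ≠ 0 := ne_of_gt hγ0
  have h1γne : (1 - γ:ℝ) ≠ 0 := ne_of_gt h1γ
  have E1 : 2 * (L ^ (1 - γ) / (1 - γ)) =
      (2 * π) ^ ((1 - γ) / 2) * (γ / (1 - γ)) ^ (1 - γ) * (2 / (1 - γ)) ^ γ * c ^ ((1 - γ) / 2) := by
    apply eq_of_log_eq (by positivity) (by positivity)
    rw [hLdef]
    simp (disch := positivity) only [Real.log_mul, Real.log_div, Real.log_rpow, Real.log_sqrt]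
    ring
  have E2 : L ^ (-γ) * Real.sqrt (2 * π * c) =
      (2 * π) ^ ((1 - γ) / 2) * (γ / (1 - γ)) ^ (-γ) * (2 / (1 - γ)) ^ γ * c ^ ((1 - γ) / 2) := by
    apply eq_of_log_eq (by positivity) (by positivity)
    rw [hLdef]
    simp (disch := positivity) only [Real.log_mul, Real.log_div, Real.log_rpow, Real.log_sqrt]
    ring
  calc (∫ z : ℝ, |z| ^ (-γ) * Real.exp (-(z - m) ^ 2 / (2 * c)))
      ≤ (∫ z : ℝ, g z) + ∫ z : ℝ, h z := hle
    _ = (2 * π) ^ ((1 - γ) / 2) * kappa γ * (2 / (1 - γ)) ^ γ * c ^ ((1 - γ) / 2) := by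
        rw [hg_val, hh_val, E1, E2, kappa]; ring

/-- For γ ∈ (0,1) and s < r < t,
J(x,t,y,s;r) = ∫_ℝ |z|^{-γ} exp(-(1/2)((x-z)²/(t-r)+(z-y)²/(r-s))) dz
 ≤ κ₁(γ)·((t-r)(r-s)/(t-s))^{(1-γ)/2}·exp(-(1-γ)(x-y)²/(2(t-s))). -/
theorem stmt_4 (γ : ℝ) (hγ : γ ∈ Ioo (0 : ℝ) 1) (s r t x y : ℝ)
    (hsr : s < r) (hrt : r < t) :
    (∫ z : ℝ, |z| ^ (-γ) *
        Real.exp (-(1 / 2) * ((x - z) ^ 2 / (t - r) + (z - y) ^ 2 / (r - s)))) ≤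
      kappa1 γ * ((t - r) * (r - s) / (t - s)) ^ ((1 - γ) / 2) *
        Real.exp (-((1 - γ) * (x - y) ^ 2) / (2 * (t - s))) := by
  obtain ⟨hγ0, hγ1⟩ := hγ
  have ha : (0:ℝ) < t - r := by linarith
  have hb : (0:ℝ) < r - s := by linarith
  have hT : (0:ℝ) < t - s := by linarith
  set c : ℝ := (t - r) * (r - s) / (t - s) with hcdef
  have hc : 0 < c := by positivity
  set m : ℝ := ((r - s) * x + (t - r) * y) / (t - s) with hmdef
  have hexp : ∀ z : ℝ, -(1 / 2) * ((x - z) ^ 2 / (t - r) + (z - y) ^ 2 / (r - s)) =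
      -(z - m) ^ 2 / (2 * c) + -(x - y) ^ 2 / (2 * (t - s)) := by
    intro z
    rw [hcdef, hmdef]
    field_simp
    ring
  have step1 : (∫ z : ℝ, |z| ^ (-γ) *
        Real.exp (-(1 / 2) * ((x - z) ^ 2 / (t - r) + (z - y) ^ 2 / (r - s)))) =
      (∫ z : ℝ, |z| ^ (-γ) * Real.exp (-(z - m) ^ 2 / (2 * c))) *
        Real.exp (-(x - y) ^ 2 / (2 * (t - s))) := by
    simp_rw [hexp, Real.exp_add, ← mul_assoc]
    rw [integral_mul_const]
  rw [step1]
  have hkey := key γ ⟨hγ0, hγ1⟩ c m hc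
  have hexp2 : Real.exp (-(x - y) ^ 2 / (2 * (t - s))) ≤
      Real.exp (-((1 - γ) * (x - y) ^ 2) / (2 * (t - s))) := by
    rw [Real.exp_le_exp]
    gcongr ?_ / (2 * (t - s))
    nlinarith [sq_nonneg (x - y)]
  calc (∫ z : ℝ, |z| ^ (-γ) * Real.exp (-(z - m) ^ 2 / (2 * c))) *
        Real.exp (-(x - y) ^ 2 / (2 * (t - s)))
      ≤ ((2 * π) ^ ((1 - γ) / 2) * kappa γ * (2 / (1 - γ)) ^ γ * c ^ ((1 - γ) / 2)) *
        Real.exp (-((1 - γ) * (x - y) ^ 2) / (2 * (t - s))) := by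
        apply mul_le_mul hkey hexp2 (Real.exp_pos _).le
        have h1γ : (0:ℝ) < 1 - γ := by linarith
        have hκ : 0 ≤ kappa γ := by rw [kappa]; positivity
        positivity
    _ = kappa1 γ * c ^ ((1 - γ) / 2) *
        Real.exp (-((1 - γ) * (x - y) ^ 2) / (2 * (t - s))) := by
        rw [kappa1]

end
end

section
/- Let γ ∈ (0,1), δ ∈ (0,1), s < r < t, and x, y ∈ ℝ. Then J_δ(x,t,y,s;r) := ∫_ℝ |z|^{-γ} exp(-(1-δ)/2 · ((x-z)²/(t-r) + (z-y)²/(r-s))) dz satisfies J_δ(x,t,y,s;r) ≤ κ₁(γ) · (1-δ)^{(γ-1)/2} · ((t-r)(r-s)/(t-s))^{(1-γ)/2} · exp(-(1-γ)(1-δ)(x-y)²/(2(t-s))), where κ₁(γ) := (2π)^{(1-γ)/2} κ(γ) (2/(1-γ))^γ and κ(γ) := (γ/(1-γ))^{1-γ} + (γ/(1-γ))^{-γ}. -/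
open Real Set MeasureTheory

noncomputable section

lemma alg1 {γ : ℝ} (h0 : 0 < γ) (h1 : γ < 1) :
    2 / (1 - γ) * (γ / 2) ^ (1 - γ) + (γ / 2) ^ (-γ)
      = kappa γ * (2 / (1 - γ)) ^ γ := by
  have h1γ : (0:ℝ) < 1 - γ := by linarith
  have hsplit : γ / 2 = (γ / (1 - γ)) * ((1 - γ) / 2) := by field_simp
  have hA : (0:ℝ) ≤ γ / (1 - γ) := by positivity
  have hB : (0:ℝ) < (1 - γ) / 2 := by positivity
  have hkey : ∀ p : ℝ, (γ / 2) ^ p = (γ / (1 - γ)) ^ p * ((1 - γ) / 2) ^ p := by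
    intro p; rw [hsplit, Real.mul_rpow hA hB.le]
  have hinv : (2 : ℝ) / (1 - γ) = ((1 - γ) / 2)⁻¹ := by field_simp
  have hD : ((1 - γ) / 2 : ℝ) ^ (-γ) = (2 / (1 - γ)) ^ γ := by
    rw [Real.rpow_neg hB.le, ← Real.inv_rpow hB.le, ← hinv]
  have hC : ((1 - γ) / 2 : ℝ) ^ (1 - γ) * (2 / (1 - γ)) = (2 / (1 - γ)) ^ γ := by
    rw [congrArg (fun p : ℝ => ((1 - γ) / 2 : ℝ) ^ p) (by ring : (1 : ℝ) - γ = -γ + 1),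
      Real.rpow_add hB, Real.rpow_one, hD]
    have h2 : ((1 - γ) / 2) * (2 / (1 - γ)) = 1 := by field_simp
    linear_combination (2 / (1 - γ)) ^ γ * h2
  rw [hkey, hkey, hD, kappa]
  linear_combination (γ / (1 - γ)) ^ (1 - γ) * hC

lemma core_bound (γ c m : ℝ) (h0 : 0 < γ) (h1 : γ < 1) (hc : 0 < c) :
    (∫ z : ℝ, |z| ^ (-γ) * Real.exp (-c * (z - m) ^ 2)) ≤
      kappa γ * (2 / (1 - γ)) ^ γ * (π / c) ^ ((1 - γ) / 2) := by
  have h1γ : (0:ℝ) < 1 - γ := by linarith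
  have hπc : (0:ℝ) < π / c := div_pos pi_pos hc
  set S : ℝ := Real.sqrt (π / c) with hSdef
  have hS : 0 < S := Real.sqrt_pos.mpr hπc
  set ρ : ℝ := γ / 2 * S with hρdef
  have hρ : 0 < ρ := by positivity
  -- interval integrability of |x| ^ (-γ)
  have hI1 : IntervalIntegrable (fun x : ℝ => |x| ^ (-γ)) volume 0 ρ := by
    have h := intervalIntegral.intervalIntegrable_rpow' (a := 0) (b := ρ) (show (-1:ℝ) < -γ by linarith)
    rw [intervalIntegrable_iff] at h ⊢
    refine h.congr_fun ?_ measurableSet_uIoc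
    intro x hx
    rw [uIoc_of_le hρ.le] at hx
    simp only [abs_of_pos hx.1]
  have hI2 : IntervalIntegrable (fun x : ℝ => |x| ^ (-γ)) volume (-ρ) 0 := by
    have h := ((IntervalIntegrable.iff_comp_neg (f := fun x : ℝ => |x| ^ (-γ))).mp hI1)
    simpa [abs_neg] using h.symm
  have hI : IntervalIntegrable (fun x : ℝ => |x| ^ (-γ)) volume (-ρ) ρ := hI2.trans hI1
  have hInd : IntegrableOn (fun z : ℝ => |z| ^ (-γ)) (Icc (-ρ) ρ) := by
    rw [intervalIntegrable_iff, uIoc_of_le (by linarith : -ρ ≤ ρ)] at hI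
    exact (integrableOn_Icc_iff_integrableOn_Ioc).mpr hI
  have hGauss : Integrable (fun z : ℝ => Real.exp (-c * (z - m) ^ 2)) :=
    Integrable.comp_sub_right (integrable_exp_neg_mul_sq hc) m
  set g : ℝ → ℝ := fun z =>
    (Icc (-ρ) ρ).indicator (fun z => |z| ^ (-γ)) z + ρ ^ (-γ) * Real.exp (-c * (z - m) ^ 2)
    with hgdef
  have hg : Integrable g :=
    (hInd.integrable_indicator measurableSet_Icc).add (hGauss.const_mul _)
  have hfg : ∀ z : ℝ, |z| ^ (-γ) * Real.exp (-c * (z - m) ^ 2) ≤ g z := by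
    intro z
    have hexp1 : Real.exp (-c * (z - m) ^ 2) ≤ 1 := by
      rw [← Real.exp_zero]
      exact Real.exp_le_exp.mpr (by nlinarith [sq_nonneg (z - m)])
    have hexp0 : 0 ≤ Real.exp (-c * (z - m) ^ 2) := (Real.exp_pos _).le
    by_cases hz : |z| ≤ ρ
    · have hmem : z ∈ Icc (-ρ) ρ := abs_le.mp hz
      simp only [hgdef, indicator_of_mem hmem]
      have : |z| ^ (-γ) * Real.exp (-c * (z - m) ^ 2) ≤ |z| ^ (-γ) :=
        mul_le_of_le_one_right (Real.rpow_nonneg (abs_nonneg z) _) hexp1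
      nlinarith [Real.rpow_nonneg hρ.le (-γ)]
    · push_neg at hz
      have hmem : z ∉ Icc (-ρ) ρ := fun h => absurd (abs_le.mpr h) (not_le.mpr hz)
      simp only [hgdef, indicator_of_notMem hmem, zero_add]
      exact mul_le_mul_of_nonneg_right
        (Real.rpow_le_rpow_of_nonpos hρ hz.le (by linarith)) hexp0
  have hmono : (∫ z : ℝ, |z| ^ (-γ) * Real.exp (-c * (z - m) ^ 2)) ≤ ∫ z : ℝ, g z := by
    refine integral_mono_of_nonneg (ae_of_all _ fun z => ?_) hg (ae_of_all _ hfg)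
    positivity
  have hGaussInt : (∫ z : ℝ, Real.exp (-c * (z - m) ^ 2)) = S := by
    rw [hSdef, ← integral_gaussian c]
    exact integral_sub_right_eq_self (fun z => Real.exp (-c * z ^ 2)) m
  have hpos : (∫ x in (0:ℝ)..ρ, |x| ^ (-γ)) = ρ ^ (-γ + 1) / (-γ + 1) := by
    rw [intervalIntegral.integral_congr (g := fun x : ℝ => x ^ (-γ))
      (fun x hx => by
        rw [uIcc_of_le hρ.le] at hx
        show |x| ^ (-γ) = x ^ (-γ)
        rw [abs_of_nonneg hx.1]),
      integral_rpow (Or.inl (by linarith)),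
      Real.zero_rpow (by intro h; linarith : -γ + 1 ≠ 0)]
    ring
  have hneg : (∫ x in (-ρ)..(0:ℝ), |x| ^ (-γ)) = ∫ x in (0:ℝ)..ρ, |x| ^ (-γ) := by
    have h := intervalIntegral.integral_comp_neg (a := (0:ℝ)) (b := ρ) (fun x => |x| ^ (-γ))
    simp only [abs_neg, neg_zero] at h
    exact h.symm
  have hIndInt : (∫ z : ℝ, (Icc (-ρ) ρ).indicator (fun z => |z| ^ (-γ)) z)
      = 2 * (ρ ^ (-γ + 1) / (-γ + 1)) := by
    rw [integral_indicator measurableSet_Icc, integral_Icc_eq_integral_Ioc,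
      ← intervalIntegral.integral_of_le (by linarith : -ρ ≤ ρ),
      ← intervalIntegral.integral_add_adjacent_intervals hI2 hI1, hneg, hpos]
    ring
  have hgInt : (∫ z : ℝ, g z)
      = 2 * (ρ ^ (-γ + 1) / (-γ + 1)) + ρ ^ (-γ) * S := by
    rw [integral_add (hInd.integrable_indicator measurableSet_Icc) (hGauss.const_mul _),
      integral_const_mul, hGaussInt, hIndInt]
  have hρpow : ∀ p : ℝ, ρ ^ p = (γ / 2) ^ p * S ^ p := fun p =>
    Real.mul_rpow (by positivity) hS.le
  have hSpow : S ^ (-γ) * S = S ^ ((1:ℝ) - γ) := by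
    rw [congrArg (fun p : ℝ => S ^ p) (by ring : (1:ℝ) - γ = -γ + 1),
      Real.rpow_add hS, Real.rpow_one]
  have hT : S ^ ((1:ℝ) - γ) = (π / c) ^ ((1 - γ) / 2) := by
    rw [hSdef, Real.sqrt_eq_rpow,
      congrArg (fun p : ℝ => (π / c) ^ p) (by ring : ((1:ℝ) - γ) / 2 = 1 / 2 * (1 - γ)),
      Real.rpow_mul hπc.le]
  have key : 2 * (ρ ^ (-γ + 1) / (-γ + 1)) + ρ ^ (-γ) * S
      = kappa γ * (2 / (1 - γ)) ^ γ * (π / c) ^ ((1 - γ) / 2) := by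
    rw [congrArg (fun p : ℝ => ρ ^ p) (by ring : -γ + (1:ℝ) = 1 - γ),
      hρpow (1 - γ), hρpow (-γ), mul_assoc, hSpow, hT,
      show (-γ + (1:ℝ)) = 1 - γ from by ring]
    linear_combination ((π / c) ^ (((1:ℝ) - γ) / 2)) * alg1 h0 h1
  calc (∫ z : ℝ, |z| ^ (-γ) * Real.exp (-c * (z - m) ^ 2)) ≤ ∫ z : ℝ, g z := hmono
    _ = kappa γ * (2 / (1 - γ)) ^ γ * (π / c) ^ ((1 - γ) / 2) := by rw [hgInt, key]

/-- For γ, δ ∈ (0,1) and s < r < t,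
J_δ(x,t,y,s;r) = ∫_ℝ |z|^{-γ} exp(-(1-δ)/2·((x-z)²/(t-r)+(z-y)²/(r-s))) dz
 ≤ κ₁(γ)·(1-δ)^{(γ-1)/2}·((t-r)(r-s)/(t-s))^{(1-γ)/2}·exp(-(1-γ)(1-δ)(x-y)²/(2(t-s))). -/
theorem stmt_6 (γ δ : ℝ) (hγ : γ ∈ Ioo (0 : ℝ) 1) (hδ : δ ∈ Ioo (0 : ℝ) 1)
    (s r t x y : ℝ) (hsr : s < r) (hrt : r < t) :
    (∫ z : ℝ, |z| ^ (-γ) *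
        Real.exp (-((1 - δ) / 2) * ((x - z) ^ 2 / (t - r) + (z - y) ^ 2 / (r - s)))) ≤
      kappa1 γ * (1 - δ) ^ ((γ - 1) / 2) *
        ((t - r) * (r - s) / (t - s)) ^ ((1 - γ) / 2) *
          Real.exp (-((1 - γ) * (1 - δ) * (x - y) ^ 2) / (2 * (t - s))) := by
  obtain ⟨hγ0, hγ1⟩ := hγ
  obtain ⟨hδ0, hδ1⟩ := hδ
  have ha : (0:ℝ) < t - r := by linarith
  have hb : (0:ℝ) < r - s := by linarith
  have hts : (0:ℝ) < t - s := by linarith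
  have hL0 : (0:ℝ) < 1 - δ := by linarith
  set L : ℝ := 1 - δ with hLdef
  set c : ℝ := L * (t - s) / (2 * (t - r) * (r - s)) with hcdef
  have hcpos : 0 < c := by positivity
  set m : ℝ := ((r - s) * x + (t - r) * y) / (t - s) with hmdef
  set E0 : ℝ := Real.exp (-(L * (x - y) ^ 2) / (2 * (t - s))) with hE0def
  have hpoint : ∀ z : ℝ,
      Real.exp (-(L / 2) * ((x - z) ^ 2 / (t - r) + (z - y) ^ 2 / (r - s)))
        = E0 * Real.exp (-c * (z - m) ^ 2) := by
    intro z
    rw [hE0def, ← Real.exp_add]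
    congr 1
    rw [hcdef, hmdef]
    field_simp
    ring
  have step1 : (∫ z : ℝ, |z| ^ (-γ) *
      Real.exp (-(L / 2) * ((x - z) ^ 2 / (t - r) + (z - y) ^ 2 / (r - s))))
      = E0 * ∫ z : ℝ, |z| ^ (-γ) * Real.exp (-c * (z - m) ^ 2) := by
    rw [← integral_const_mul]
    congr 1
    funext z
    rw [hpoint z]
    ring
  have hcore := core_bound γ c m hγ0 hγ1 hcpos
  have hpc : π / c = (2 * π) * ((t - r) * (r - s) / (t - s)) * L⁻¹ := by
    rw [hcdef]
    field_simp
  have hQ : (0:ℝ) ≤ (t - r) * (r - s) / (t - s) := by positivity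
  have hexpand : (π / c) ^ ((1 - γ) / 2)
      = (2 * π) ^ ((1 - γ) / 2) * ((t - r) * (r - s) / (t - s)) ^ ((1 - γ) / 2)
        * L ^ ((γ - 1) / 2) := by
    rw [hpc, Real.mul_rpow (by positivity) (by positivity), Real.mul_rpow (by positivity) hQ,
      Real.inv_rpow hL0.le, ← Real.rpow_neg hL0.le,
      congrArg (fun q : ℝ => L ^ q) (by ring : -((1 - γ) / 2) = (γ - 1) / 2)]
  have hEe : E0 ≤ Real.exp (-((1 - γ) * L * (x - y) ^ 2) / (2 * (t - s))) := by
    rw [hE0def]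
    apply Real.exp_le_exp.mpr
    rw [neg_div, neg_div, neg_le_neg_iff,
      div_le_div_iff₀ (by positivity) (by positivity)]
    nlinarith [mul_nonneg (mul_nonneg (mul_nonneg hγ0.le hL0.le) (sq_nonneg (x - y)))
      (by positivity : (0:ℝ) ≤ 2 * (t - s))]
  have hkap : (0:ℝ) ≤ kappa γ := by
    have h1 : (0:ℝ) ≤ γ / (1 - γ) := by
      have : (0:ℝ) < 1 - γ := by linarith
      positivity
    exact add_nonneg (Real.rpow_nonneg h1 _) (Real.rpow_nonneg h1 _)
  have h1γ : (0:ℝ) < 1 - γ := by linarith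
  have hCnn : (0:ℝ) ≤ kappa1 γ * L ^ ((γ - 1) / 2)
      * ((t - r) * (r - s) / (t - s)) ^ ((1 - γ) / 2) := by
    have : (0:ℝ) ≤ kappa1 γ := by
      rw [kappa1]
      have : (0:ℝ) ≤ (2 / (1 - γ)) ^ γ := Real.rpow_nonneg (by positivity) _
      positivity
    positivity
  calc (∫ z : ℝ, |z| ^ (-γ) *
      Real.exp (-((1 - δ) / 2) * ((x - z) ^ 2 / (t - r) + (z - y) ^ 2 / (r - s))))
      = E0 * ∫ z : ℝ, |z| ^ (-γ) * Real.exp (-c * (z - m) ^ 2) := step1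
    _ ≤ E0 * (kappa γ * (2 / (1 - γ)) ^ γ * (π / c) ^ ((1 - γ) / 2)) :=
        mul_le_mul_of_nonneg_left hcore (Real.exp_pos _).le
    _ = (kappa1 γ * L ^ ((γ - 1) / 2)
          * ((t - r) * (r - s) / (t - s)) ^ ((1 - γ) / 2)) * E0 := by
        rw [hexpand, kappa1]; ring
    _ ≤ (kappa1 γ * L ^ ((γ - 1) / 2)
          * ((t - r) * (r - s) / (t - s)) ^ ((1 - γ) / 2))
          * Real.exp (-((1 - γ) * L * (x - y) ^ 2) / (2 * (t - s))) :=
        mul_le_mul_of_nonneg_left hEe hCnn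
end
end

section
/- Let γ, β ∈ [0,1), α₁, α₂ > -1, and s < t, x ≠ 0, y ∈ ℝ. Define G₁(x,t,y,s) := (t-s)^{α₁} |x|^{-β} exp(-(x-y)²/(2(t-s))) and G₂(x,t,y,s) := (t-s)^{α₂} |x|^{-γ} exp(-(x-y)²/(2(t-s))). Then their convolution G(x,t,y,s) := ∫_s^t ∫_ℝ G₁(x,t,z,r) G₂(z,r,y,s) dz dr satisfies G(x,t,y,s) ≤ κ₁(γ) · (t-s)^{3/2 + α₁ + α₂ - γ/2} · |x|^{-β} · B((3-γ)/2 + α₁, (3-γ)/2 + α₂) · exp(-(1-γ)(x-y)²/(2(t-s))), where B(a,b) = Γ(a)Γ(b)/Γ(a+b) is the Euler Beta function. -/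
open Real Set MeasureTheory

noncomputable section

/-- The Euler Beta function B(a,b) = Γ(a)Γ(b)/Γ(a+b). -/
def betaFn (a b : ℝ) : ℝ := Real.Gamma a * Real.Gamma b / Real.Gamma (a + b)

lemma beta_real {a b : ℝ} (ha : 0 < a) (hb : 0 < b) :
    ∫ x in (0:ℝ)..1, x ^ (a - 1) * (1 - x) ^ (b - 1) = betaFn a b := by
  have hC := Complex.Gamma_mul_Gamma_eq_betaIntegral
    (s := (a : ℂ)) (t := (b : ℂ)) (by simpa using ha) (by simpa using hb)
  have hI : Complex.betaIntegral (a : ℂ) (b : ℂ)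
      = ((∫ x in (0:ℝ)..1, x ^ (a - 1) * (1 - x) ^ (b - 1) : ℝ) : ℂ) := by
    rw [Complex.betaIntegral, ← intervalIntegral.integral_ofReal]
    apply intervalIntegral.integral_congr
    intro x hx
    rw [uIcc_of_le zero_le_one] at hx
    have hx0 : (0:ℝ) ≤ x := hx.1
    have hx1 : (0:ℝ) ≤ 1 - x := by linarith [hx.2]
    show (x:ℂ) ^ ((a:ℂ) - 1) * (1 - (x:ℂ)) ^ ((b:ℂ) - 1) = ((x ^ (a - 1) * (1 - x) ^ (b - 1) : ℝ) : ℂ)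
    rw [Complex.ofReal_mul, Complex.ofReal_cpow hx0, Complex.ofReal_cpow hx1]
    push_cast
    ring
  rw [hI] at hC
  have hG : ∀ c : ℝ, Complex.Gamma (c : ℂ) = (Real.Gamma c : ℂ) := fun c => Complex.Gamma_ofReal c
  rw [hG, hG, show ((a:ℂ) + b) = ((a + b : ℝ) : ℂ) by push_cast; ring, hG] at hC
  have hC' : Real.Gamma a * Real.Gamma b
      = Real.Gamma (a + b) * ∫ x in (0:ℝ)..1, x ^ (a - 1) * (1 - x) ^ (b - 1) := by
    exact_mod_cast hC
  have hne : Real.Gamma (a + b) ≠ 0 := (Real.Gamma_pos_of_pos (by linarith)).ne'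
  rw [betaFn, hC']
  field_simp

lemma II01 {p q : ℝ} (hp : 0 < p) (hq : 0 < q) :
    IntervalIntegrable (fun v : ℝ => v ^ (q - 1) * (1 - v) ^ (p - 1)) volume 0 1 := by
  have h1 : IntervalIntegrable (fun v : ℝ => v ^ (q - 1) * (1 - v) ^ (p - 1)) volume 0 (1/2) := by
    apply (intervalIntegral.intervalIntegrable_rpow' (by linarith : (-1:ℝ) < q - 1)).mul_continuousOn
    apply ContinuousOn.rpow_const
    · fun_prop
    · intro v hv
      rw [uIcc_of_le (by norm_num : (0:ℝ) ≤ 1/2)] at hv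
      left
      have := hv.2
      intro h; rw [sub_eq_zero] at h; simp_all; linarith
  have h2 : IntervalIntegrable (fun v : ℝ => v ^ (q - 1) * (1 - v) ^ (p - 1)) volume (1/2) 1 := by
    have hbase : IntervalIntegrable (fun x : ℝ => x ^ (p - 1)) volume 0 (1/2) :=
      intervalIntegral.intervalIntegrable_rpow' (by linarith)
    have := hbase.comp_sub_left 1
    norm_num at this
    apply this.symm.continuousOn_mul
    apply ContinuousOn.rpow_const
    · fun_prop
    · intro v hv
      rw [uIcc_of_le (by norm_num : (1/2:ℝ) ≤ 1)] at hv
      left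
      have := hv.1; positivity
  exact h1.trans h2

lemma II_st {p q s t : ℝ} (hp : 0 < p) (hq : 0 < q) (hst : s < t) :
    IntervalIntegrable (fun r : ℝ => (t - r) ^ (p - 1) * (r - s) ^ (q - 1)) volume s t := by
  have hT : (0:ℝ) < t - s := by linarith
  have h1 : IntervalIntegrable (fun v : ℝ => v ^ (q - 1) * (1 - v) ^ (p - 1)) volume 0 1 :=
    II01 hp hq
  have h2 := (h1.comp_mul_left (c := 1 / (t - s)))
  norm_num [hT.ne'] at h2
  have h3 := h2.comp_sub_right s
  simp only [zero_add, sub_add_cancel] at h3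
  have h5 := (h3.const_mul ((t - s) ^ (q - 1) * (t - s) ^ (p - 1)))
  rw [intervalIntegrable_iff_integrableOn_Ioc_of_le hst.le] at h5 ⊢
  apply h5.congr_fun ?_ measurableSet_Ioc
  intro r hr
  simp only []
  have h1r : 0 ≤ r - s := by linarith [hr.1]
  have h2r : 0 ≤ t - r := by linarith [hr.2]
  have e1 : (1 : ℝ) - (t - s)⁻¹ * (r - s) = (t - r) / (t - s) := by
    field_simp
    ring
  have e2 : (t - s)⁻¹ * (r - s) = (r - s) / (t - s) := by ring
  rw [e1, e2, Real.div_rpow h1r hT.le, Real.div_rpow h2r hT.le]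
  field_simp

lemma beta_st {p q s t : ℝ} (hp : 0 < p) (hq : 0 < q) (hst : s < t) :
    ∫ r in s..t, (t - r) ^ (p - 1) * (r - s) ^ (q - 1)
      = (t - s) ^ (p + q - 1) * betaFn p q := by
  have hT : (0:ℝ) < t - s := by linarith
  have step1 : (∫ r in s..t, (t - r) ^ (p - 1) * (r - s) ^ (q - 1))
      = ∫ u in (0:ℝ)..(t - s), (t - s - u) ^ (p - 1) * u ^ (q - 1) := by
    have := intervalIntegral.integral_comp_sub_right
      (a := s) (b := t) (fun u : ℝ => (t - s - u) ^ (p - 1) * u ^ (q - 1)) s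
    simp only [sub_self] at this
    rw [← this]
    apply intervalIntegral.integral_congr
    intro r _
    show (t - r) ^ (p - 1) * (r - s) ^ (q - 1) = (t - s - (r - s)) ^ (p - 1) * (r - s) ^ (q - 1)
    have : t - s - (r - s) = t - r := by ring
    rw [this]
  have step2 : (∫ u in (0:ℝ)..(t - s), (t - s - u) ^ (p - 1) * u ^ (q - 1))
      = (t - s) * ∫ v in (0:ℝ)..1, (t - s - (t - s) * v) ^ (p - 1) * ((t - s) * v) ^ (q - 1) := by
    have := intervalIntegral.integral_comp_mul_left
      (a := (0:ℝ)) (b := 1) (fun u : ℝ => (t - s - u) ^ (p - 1) * u ^ (q - 1)) hT.ne'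
    simp only [mul_zero, mul_one] at this
    rw [this, smul_eq_mul, ← mul_assoc, mul_inv_cancel₀ hT.ne', one_mul]
  have step3 : (∫ v in (0:ℝ)..1, (t - s - (t - s) * v) ^ (p - 1) * ((t - s) * v) ^ (q - 1))
      = (t - s) ^ (p - 1) * (t - s) ^ (q - 1) * ∫ v in (0:ℝ)..1, v ^ (q - 1) * (1 - v) ^ (p - 1) := by
    rw [← intervalIntegral.integral_const_mul]
    apply intervalIntegral.integral_congr
    intro v hv
    rw [uIcc_of_le zero_le_one] at hv
    have hv0 : 0 ≤ v := hv.1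
    have hv1 : 0 ≤ 1 - v := by linarith [hv.2]
    have e1 : t - s - (t - s) * v = (t - s) * (1 - v) := by ring
    show (t - s - (t - s) * v) ^ (p - 1) * ((t - s) * v) ^ (q - 1)
      = (t - s) ^ (p - 1) * (t - s) ^ (q - 1) * (v ^ (q - 1) * (1 - v) ^ (p - 1))
    rw [e1, Real.mul_rpow hT.le hv1, Real.mul_rpow hT.le hv0]
    ring
  have step4 : (∫ v in (0:ℝ)..1, v ^ (q - 1) * (1 - v) ^ (p - 1)) = betaFn p q := by
    rw [beta_real hq hp]
    unfold betaFn
    rw [add_comm q p]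
    ring
  rw [step1, step2, step3, step4]
  rw [show (t - s) * ((t - s) ^ (p - 1) * (t - s) ^ (q - 1) * betaFn p q)
      = ((t - s) ^ (1:ℝ) * ((t - s) ^ (p - 1) * (t - s) ^ (q - 1))) * betaFn p q by
    rw [Real.rpow_one]; ring]
  rw [← Real.rpow_add hT, ← Real.rpow_add hT]
  ring_nf

lemma gauss_shift {v : ℝ} (hv : 0 < v) (m : ℝ) :
    ∫ z : ℝ, Real.exp (-(z - m) ^ 2 / (2 * v)) = Real.sqrt (2 * π * v) := by
  have h1 : ∀ z : ℝ, Real.exp (-(z - m) ^ 2 / (2 * v))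
      = (fun u : ℝ => Real.exp (-(1 / (2 * v)) * u ^ 2)) (z - m) := by
    intro z; simp only []; congr 1; field_simp
  simp_rw [h1]
  rw [integral_sub_right_eq_self (μ := volume) (fun u : ℝ => Real.exp (-(1 / (2 * v)) * u ^ 2)) m]
  rw [integral_gaussian]
  congr 1
  field_simp
lemma gauss_integrable {v : ℝ} (hv : 0 < v) (m : ℝ) :
    Integrable (fun z : ℝ => Real.exp (-(z - m) ^ 2 / (2 * v))) := by
  have h1 : ∀ z : ℝ, Real.exp (-(z - m) ^ 2 / (2 * v))
      = (fun u : ℝ => Real.exp (-(1 / (2 * v)) * u ^ 2)) (z - m) := by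
    intro z; simp only []; congr 1; field_simp
  simp_rw [h1]
  exact (integrable_exp_neg_mul_sq (by positivity)).comp_sub_right m

lemma abs_rpow_II_nonneg {γ : ℝ} (hγ1 : γ < 1) {R : ℝ} (hR : 0 ≤ R) :
    IntervalIntegrable (fun z : ℝ => |z| ^ (-γ)) volume 0 R := by
  have h0 : IntervalIntegrable (fun z : ℝ => z ^ (-γ)) volume 0 R :=
    intervalIntegral.intervalIntegrable_rpow' (by linarith)
  rw [intervalIntegrable_iff_integrableOn_Ioc_of_le hR] at h0 ⊢
  apply h0.congr_fun ?_ measurableSet_Ioc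
  intro z hz; simp [abs_of_nonneg hz.1.le]

lemma abs_rpow_II {γ : ℝ} (hγ1 : γ < 1) (R : ℝ) :
    IntervalIntegrable (fun z : ℝ => |z| ^ (-γ)) volume 0 R := by
  rcases le_total 0 R with h | h
  · exact abs_rpow_II_nonneg hγ1 h
  · have h0 := abs_rpow_II_nonneg hγ1 (by linarith : (0:ℝ) ≤ -R)
    have h1 := (IntervalIntegrable.iff_comp_neg).mp h0
    simp only [abs_neg, neg_zero, neg_neg] at h1
    exact h1

lemma abs_rpow_integral {γ : ℝ} (hγ0 : 0 ≤ γ) (hγ1 : γ < 1) {R : ℝ} (hR : 0 ≤ R) :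
    ∫ z in (-R)..R, |z| ^ (-γ) = 2 * R ^ (1 - γ) / (1 - γ) := by
  have hmid : (∫ z in (-R)..(0:ℝ), |z| ^ (-γ)) + ∫ z in (0:ℝ)..R, |z| ^ (-γ)
      = ∫ z in (-R)..R, |z| ^ (-γ) :=
    intervalIntegral.integral_add_adjacent_intervals
      ((abs_rpow_II hγ1 (-R)).symm) (abs_rpow_II hγ1 R)
  have hpos : (∫ z in (0:ℝ)..R, |z| ^ (-γ)) = R ^ (1 - γ) / (1 - γ) := by
    have : (∫ z in (0:ℝ)..R, |z| ^ (-γ)) = ∫ z in (0:ℝ)..R, z ^ (-γ) := by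
      apply intervalIntegral.integral_congr
      intro z hz
      rw [uIcc_of_le hR] at hz
      simp [abs_of_nonneg hz.1]
    rw [this, integral_rpow (Or.inl (by linarith))]
    rw [Real.zero_rpow (by intro h; linarith : -γ + 1 ≠ 0)]
    norm_num
    rw [show -γ + 1 = 1 - γ by ring]
  have hneg : (∫ z in (-R)..(0:ℝ), |z| ^ (-γ)) = ∫ z in (0:ℝ)..R, |z| ^ (-γ) := by
    have := intervalIntegral.integral_comp_neg (a := (0:ℝ)) (b := R) (fun z : ℝ => |z| ^ (-γ))
    simp only [abs_neg, neg_zero] at this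
    rw [← this]
  rw [← hmid, hneg, hpos]
  ring

lemma kappa1_nonneg {γ : ℝ} (hγ0 : 0 ≤ γ) (hγ1 : γ < 1) : 0 ≤ kappa1 γ := by
  unfold kappa1 kappa
  have h1 : (0:ℝ) ≤ γ / (1 - γ) := div_nonneg hγ0 (by linarith)
  have := Real.rpow_nonneg h1 (1 - γ)
  have := Real.rpow_nonneg h1 (-γ)
  have := Real.rpow_nonneg (by positivity : (0:ℝ) ≤ 2 * π) ((1 - γ) / 2)
  have := Real.rpow_nonneg (div_nonneg (by norm_num) (by linarith) : (0:ℝ) ≤ 2 / (1 - γ)) γ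
  positivity

lemma lemA {γ : ℝ} (hγ0 : 0 ≤ γ) (hγ1 : γ < 1) {v : ℝ} (hv : 0 < v) (m : ℝ) :
    ∫ z : ℝ, |z| ^ (-γ) * Real.exp (-(z - m) ^ 2 / (2 * v))
      ≤ kappa1 γ * v ^ ((1 - γ) / 2) := by
  have h1γ : (0:ℝ) < 1 - γ := by linarith
  have hσ : 0 < Real.sqrt v := Real.sqrt_pos.mpr hv
  have hσv : (Real.sqrt v) ^ (1 - γ) = v ^ ((1 - γ) / 2) := by
    rw [Real.sqrt_eq_rpow, ← Real.rpow_mul hv.le]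
    ring_nf
  rcases eq_or_lt_of_le hγ0 with h0 | h0
  · -- γ = 0
    subst h0
    simp only [neg_zero, Real.rpow_zero, one_mul]
    rw [gauss_shift hv m]
    apply le_of_eq
    have hk : kappa1 0 = (2 * π) ^ ((1:ℝ)/2) := by simp [kappa1, kappa]
    rw [hk, show ((1:ℝ) - 0)/2 = (1:ℝ)/2 by norm_num,
      Real.sqrt_mul (by positivity : (0:ℝ) ≤ 2 * π) v, Real.sqrt_eq_rpow,
      Real.sqrt_eq_rpow]
  · -- 0 < γ
    set A := Real.sqrt (2 * π) with hA
    have hApos : 0 < A := Real.sqrt_pos.mpr (by positivity)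
    set B := 2 / (1 - γ) with hB
    have hBpos : 0 < B := by positivity
    set c := γ / (1 - γ) with hc
    have hcpos : 0 < c := by positivity
    set lam := c * A / B with hlam
    have hlampos : 0 < lam := by positivity
    set R := lam * Real.sqrt v with hR
    have hRpos : 0 < R := by positivity
    set g₁ : ℝ → ℝ := Set.indicator (Icc (-R) R) (fun z => |z| ^ (-γ)) with hg₁
    set g₂ : ℝ → ℝ := fun z => R ^ (-γ) * Real.exp (-(z - m) ^ 2 / (2 * v)) with hg₂
    have hg₁_int : Integrable g₁ := by
      rw [hg₁, integrable_indicator_iff measurableSet_Icc]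
      have h := ((abs_rpow_II hγ1 (-R)).symm.trans (abs_rpow_II hγ1 R))
      rw [intervalIntegrable_iff_integrableOn_Ioc_of_le (by linarith)] at h
      rwa [integrableOn_Icc_iff_integrableOn_Ioc]
    have hg₂_int : Integrable g₂ := (gauss_integrable hv m).const_mul _
    have hf_meas : AEStronglyMeasurable (fun z : ℝ => |z| ^ (-γ) * Real.exp (-(z - m) ^ 2 / (2 * v)))
        (volume : Measure ℝ) := by
      apply AEStronglyMeasurable.mul
      · exact (measurable_abs.pow_const (-γ)).aestronglyMeasurable
      · exact (Real.measurable_exp.comp (by fun_prop)).aestronglyMeasurable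
    have hbound : ∀ z : ℝ, |z| ^ (-γ) * Real.exp (-(z - m) ^ 2 / (2 * v)) ≤ g₁ z + g₂ z := by
      intro z
      rcases le_or_gt |z| R with h | h
      · have hz : z ∈ Icc (-R) R := by
          constructor <;> [linarith [neg_abs_le z]; linarith [le_abs_self z]]
        rw [hg₁, Set.indicator_of_mem hz]
        have e1 : Real.exp (-(z - m) ^ 2 / (2 * v)) ≤ 1 := by
          rw [Real.exp_le_one_iff]
          apply div_nonpos_of_nonpos_of_nonneg <;> [nlinarith [sq_nonneg (z - m)]; positivity]
        have e2 : (0:ℝ) ≤ |z| ^ (-γ) := Real.rpow_nonneg (abs_nonneg z) _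
        have e3 : |z| ^ (-γ) * Real.exp (-(z - m) ^ 2 / (2 * v)) ≤ |z| ^ (-γ) := by
          nlinarith [Real.exp_pos (-(z - m) ^ 2 / (2 * v))]
        have e4 : 0 ≤ g₂ z := by
          rw [hg₂]
          have := Real.rpow_nonneg hRpos.le (-γ)
          positivity
        linarith
      · have e1 : |z| ^ (-γ) ≤ R ^ (-γ) :=
          Real.rpow_le_rpow_of_nonpos hRpos h.le (by linarith)
        have e2 : 0 ≤ g₁ z := by
          rw [hg₁]
          apply Set.indicator_nonneg
          intro a _; exact Real.rpow_nonneg (abs_nonneg a) _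
        have e3 : (0:ℝ) < Real.exp (-(z - m) ^ 2 / (2 * v)) := Real.exp_pos _
        have : |z| ^ (-γ) * Real.exp (-(z - m) ^ 2 / (2 * v)) ≤ g₂ z := by
          rw [hg₂]; exact mul_le_mul_of_nonneg_right e1 e3.le
        linarith
    have hf_int : Integrable (fun z : ℝ => |z| ^ (-γ) * Real.exp (-(z - m) ^ 2 / (2 * v))) := by
      apply Integrable.mono' (hg₁_int.add hg₂_int) hf_meas
      filter_upwards with z
      rw [Real.norm_eq_abs, abs_of_nonneg (by positivity)]
      · exact hbound z
    have key : ∫ z : ℝ, |z| ^ (-γ) * Real.exp (-(z - m) ^ 2 / (2 * v))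
        ≤ (∫ z : ℝ, g₁ z) + ∫ z : ℝ, g₂ z := by
      rw [← integral_add hg₁_int hg₂_int]
      exact integral_mono hf_int (hg₁_int.add hg₂_int) hbound
    have hint1 : (∫ z : ℝ, g₁ z) = 2 * R ^ (1 - γ) / (1 - γ) := by
      rw [hg₁, integral_indicator measurableSet_Icc, integral_Icc_eq_integral_Ioc,
        ← intervalIntegral.integral_of_le (by linarith : -R ≤ R)]
      exact abs_rpow_integral hγ0 hγ1 hRpos.le
    have hint2 : (∫ z : ℝ, g₂ z) = R ^ (-γ) * Real.sqrt (2 * π * v) := by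
      rw [hg₂, integral_const_mul, gauss_shift hv m]
    rw [hint1, hint2] at key
    refine key.trans (le_of_eq ?_)
    -- now pure algebra
    have hRrw : ∀ e : ℝ, R ^ e = lam ^ e * (Real.sqrt v) ^ e := fun e => by
      rw [hR, Real.mul_rpow hlampos.le (Real.sqrt_nonneg v)]
    have hsq : Real.sqrt (2 * π * v) = A * Real.sqrt v := by
      rw [show (2 * π * v) = (2 * π) * v by ring, Real.sqrt_mul (by positivity) v]
    have hσγ : (Real.sqrt v) ^ (-γ) * Real.sqrt v = (Real.sqrt v) ^ (1 - γ) := by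
      nth_rewrite 2 [show Real.sqrt v = (Real.sqrt v) ^ (1:ℝ) by rw [Real.rpow_one]]
      rw [← Real.rpow_add hσ]; ring_nf
    have hlam_rw : ∀ e : ℝ, lam ^ e = c ^ e * A ^ e / B ^ e := fun e => by
      rw [hlam, Real.div_rpow (by positivity) hBpos.le, Real.mul_rpow hcpos.le hApos.le]
    have hA1γ : A * A ^ (-γ) = A ^ (1 - γ) := by
      nth_rewrite 1 [show A = A ^ (1:ℝ) by rw [Real.rpow_one]]
      rw [← Real.rpow_add hApos]; ring_nf
    have hB1γ : B / B ^ (1 - γ) = B ^ γ := by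
      nth_rewrite 1 [show B = B ^ (1:ℝ) by rw [Real.rpow_one]]
      rw [← Real.rpow_sub hBpos]; ring_nf
    have hBsplit : B ^ (1:ℝ) = B ^ (1 - γ) * B ^ γ := by
      rw [← Real.rpow_add hBpos]; ring_nf
    have hApow : A ^ (1 - γ) = (2 * π) ^ ((1 - γ) / 2) := by
      rw [hA, Real.sqrt_eq_rpow, ← Real.rpow_mul (by positivity)]
      ring_nf
    calc 2 * R ^ (1 - γ) / (1 - γ) + R ^ (-γ) * Real.sqrt (2 * π * v)
        = B * (R ^ (1 - γ)) + R ^ (-γ) * (A * Real.sqrt v) := by rw [hsq, hB]; ring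
      _ = B * (lam ^ (1 - γ)) * (Real.sqrt v) ^ (1 - γ)
            + A * (lam ^ (-γ)) * ((Real.sqrt v) ^ (-γ) * Real.sqrt v) := by
          rw [hRrw (1 - γ), hRrw (-γ)]; ring
      _ = (B * lam ^ (1 - γ) + A * lam ^ (-γ)) * (Real.sqrt v) ^ (1 - γ) := by
          rw [hσγ]; ring
      _ = kappa1 γ * v ^ ((1 - γ) / 2) := by
          rw [hσv]
          congr 1
          have hBneg : (B ^ (-γ))⁻¹ = B ^ γ := by
            rw [Real.rpow_neg hBpos.le, inv_inv]
          have e1 : B * lam ^ (1 - γ) = c ^ (1 - γ) * A ^ (1 - γ) * B ^ γ := by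
            rw [hlam_rw (1 - γ)]
            calc B * (c ^ (1 - γ) * A ^ (1 - γ) / B ^ (1 - γ))
                = c ^ (1 - γ) * A ^ (1 - γ) * (B / B ^ (1 - γ)) := by ring
              _ = c ^ (1 - γ) * A ^ (1 - γ) * B ^ γ := by rw [hB1γ]
          have e2 : A * lam ^ (-γ) = c ^ (-γ) * A ^ (1 - γ) * B ^ γ := by
            rw [hlam_rw (-γ)]
            calc A * (c ^ (-γ) * A ^ (-γ) / B ^ (-γ))
                = c ^ (-γ) * (A * A ^ (-γ)) * (B ^ (-γ))⁻¹ := by ring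
              _ = c ^ (-γ) * A ^ (1 - γ) * B ^ γ := by rw [hA1γ, hBneg]
          rw [e1, e2, kappa1, kappa, ← hApow, ← hB, ← hc]
          ring

lemma expid (x y z : ℝ) {τ₁ τ₂ : ℝ} (h1 : 0 < τ₁) (h2 : 0 < τ₂) :
    Real.exp (-(x - z) ^ 2 / (2 * τ₁)) * Real.exp (-(z - y) ^ 2 / (2 * τ₂))
      = Real.exp (-(x - y) ^ 2 / (2 * (τ₁ + τ₂)))
        * Real.exp (-(z - (τ₂ * x + τ₁ * y) / (τ₁ + τ₂)) ^ 2 / (2 * (τ₁ * τ₂ / (τ₁ + τ₂)))) := by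
  rw [← Real.exp_add, ← Real.exp_add]
  congr 1
  have h12 : τ₁ + τ₂ ≠ 0 := by positivity
  field_simp
  ring

lemma inner_bound {γ : ℝ} (hγ0 : 0 ≤ γ) (hγ1 : γ < 1) (β α₁ α₂ x y : ℝ)
    {τ₁ τ₂ : ℝ} (h1 : 0 < τ₁) (h2 : 0 < τ₂) :
    (∫ z : ℝ, (τ₁ ^ α₁ * |x| ^ (-β) * Real.exp (-((x - z) ^ 2) / (2 * τ₁))) *
        (τ₂ ^ α₂ * |z| ^ (-γ) * Real.exp (-((z - y) ^ 2) / (2 * τ₂))))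
      ≤ τ₁ ^ α₁ * τ₂ ^ α₂ * |x| ^ (-β) * Real.exp (-(x - y) ^ 2 / (2 * (τ₁ + τ₂)))
        * (kappa1 γ * (τ₁ * τ₂ / (τ₁ + τ₂)) ^ ((1 - γ) / 2)) := by
  set m := (τ₂ * x + τ₁ * y) / (τ₁ + τ₂) with hm
  set v := τ₁ * τ₂ / (τ₁ + τ₂) with hv
  have hvpos : 0 < v := by rw [hv]; positivity
  set C := τ₁ ^ α₁ * τ₂ ^ α₂ * |x| ^ (-β) * Real.exp (-(x - y) ^ 2 / (2 * (τ₁ + τ₂))) with hC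
  have hCpos : 0 ≤ C := by
    rw [hC]
    have := Real.rpow_nonneg h1.le α₁
    have := Real.rpow_nonneg h2.le α₂
    have := Real.rpow_nonneg (abs_nonneg x) (-β)
    positivity
  have hrw : ∀ z : ℝ, (τ₁ ^ α₁ * |x| ^ (-β) * Real.exp (-((x - z) ^ 2) / (2 * τ₁))) *
      (τ₂ ^ α₂ * |z| ^ (-γ) * Real.exp (-((z - y) ^ 2) / (2 * τ₂)))
      = C * (|z| ^ (-γ) * Real.exp (-(z - m) ^ 2 / (2 * v))) := by
    intro z
    have e := expid x y z h1 h2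
    calc (τ₁ ^ α₁ * |x| ^ (-β) * Real.exp (-((x - z) ^ 2) / (2 * τ₁))) *
        (τ₂ ^ α₂ * |z| ^ (-γ) * Real.exp (-((z - y) ^ 2) / (2 * τ₂)))
        = (τ₁ ^ α₁ * τ₂ ^ α₂ * |x| ^ (-β)) * |z| ^ (-γ) *
          (Real.exp (-(x - z) ^ 2 / (2 * τ₁)) * Real.exp (-(z - y) ^ 2 / (2 * τ₂))) := by ring
      _ = C * (|z| ^ (-γ) * Real.exp (-(z - m) ^ 2 / (2 * v))) := by rw [e, hC, hm, hv]; ring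
  simp_rw [hrw]
  rw [MeasureTheory.integral_const_mul]
  exact mul_le_mul_of_nonneg_left (lemA hγ0 hγ1 hvpos m) hCpos

/-- With G₁(x,t,y,s) = (t-s)^{α₁}|x|^{-β}exp(-(x-y)²/(2(t-s))) and
G₂(x,t,y,s) = (t-s)^{α₂}|x|^{-γ}exp(-(x-y)²/(2(t-s))), the convolution
G = G₁*G₂ satisfies
G(x,t,y,s) ≤ κ₁(γ)(t-s)^{3/2+α₁+α₂-γ/2}|x|^{-β}B((3-γ)/2+α₁,(3-γ)/2+α₂)·
exp(-(1-γ)(x-y)²/(2(t-s))). -/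
theorem stmt_9 (γ β α₁ α₂ : ℝ) (hγ : γ ∈ Ico (0 : ℝ) 1) (hβ : β ∈ Ico (0 : ℝ) 1)
    (hα₁ : -1 < α₁) (hα₂ : -1 < α₂) (s t x y : ℝ) (hst : s < t) (hx : x ≠ 0) :
    (∫ r in s..t, ∫ z : ℝ,
        ((t - r) ^ α₁ * |x| ^ (-β) * Real.exp (-((x - z) ^ 2) / (2 * (t - r)))) *
          ((r - s) ^ α₂ * |z| ^ (-γ) * Real.exp (-((z - y) ^ 2) / (2 * (r - s))))) ≤
      kappa1 γ * (t - s) ^ (3 / 2 + α₁ + α₂ - γ / 2) * |x| ^ (-β) *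
        betaFn ((3 - γ) / 2 + α₁) ((3 - γ) / 2 + α₂) *
          Real.exp (-((1 - γ) * (x - y) ^ 2) / (2 * (t - s))) := by
  obtain ⟨hγ0, hγ1⟩ := hγ
  obtain ⟨hβ0, hβ1⟩ := hβ
  have hT : (0:ℝ) < t - s := by linarith
  have hp : (0:ℝ) < (3 - γ) / 2 + α₁ := by linarith
  have hq : (0:ℝ) < (3 - γ) / 2 + α₂ := by linarith
  have hxb : (0:ℝ) ≤ |x| ^ (-β) := Real.rpow_nonneg (abs_nonneg x) _
  have hk1 : 0 ≤ kappa1 γ := kappa1_nonneg hγ0 hγ1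
  have hbetapos : 0 < betaFn ((3 - γ) / 2 + α₁) ((3 - γ) / 2 + α₂) := by
    rw [betaFn]
    have := Real.Gamma_pos_of_pos hp
    have := Real.Gamma_pos_of_pos hq
    have := Real.Gamma_pos_of_pos (by linarith : (0:ℝ) < (3 - γ) / 2 + α₁ + ((3 - γ) / 2 + α₂))
    positivity
  set D := kappa1 γ * |x| ^ (-β) * Real.exp (-((1 - γ) * (x - y) ^ 2) / (2 * (t - s)))
      * (t - s) ^ (-((1 - γ) / 2)) with hD
  have hDnn : 0 ≤ D := by
    rw [hD]
    have := Real.rpow_nonneg hT.le (-((1 - γ) / 2))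
    positivity
  set F : ℝ → ℝ := fun r => ∫ z : ℝ,
      ((t - r) ^ α₁ * |x| ^ (-β) * Real.exp (-((x - z) ^ 2) / (2 * (t - r)))) *
        ((r - s) ^ α₂ * |z| ^ (-γ) * Real.exp (-((z - y) ^ 2) / (2 * (r - s)))) with hF
  set H : ℝ → ℝ := fun r =>
      D * ((t - r) ^ (α₁ + (1 - γ) / 2) * (r - s) ^ (α₂ + (1 - γ) / 2)) with hH
  have hbase_int : IntervalIntegrable
      (fun r : ℝ => (t - r) ^ (α₁ + (1 - γ) / 2) * (r - s) ^ (α₂ + (1 - γ) / 2)) volume s t := by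
    have h0 := II_st hp hq hst
    simp only [show (3 - γ) / 2 + α₁ - 1 = α₁ + (1 - γ) / 2 by ring,
      show (3 - γ) / 2 + α₂ - 1 = α₂ + (1 - γ) / 2 by ring] at h0
    exact h0
  have hH_int : IntervalIntegrable H volume s t := hbase_int.const_mul D
  have hbeta := beta_st hp hq hst
  simp only [show (3 - γ) / 2 + α₁ - 1 = α₁ + (1 - γ) / 2 by ring,
    show (3 - γ) / 2 + α₂ - 1 = α₂ + (1 - γ) / 2 by ring] at hbeta
  have hmono : ∀ r ∈ Ioo s t, F r ≤ H r := by
    intro r hr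
    have hτ₁ : (0:ℝ) < t - r := by linarith [hr.2]
    have hτ₂ : (0:ℝ) < r - s := by linarith [hr.1]
    have hb := inner_bound hγ0 hγ1 β α₁ α₂ x y hτ₁ hτ₂
    rw [show t - r + (r - s) = t - s by ring] at hb
    refine hb.trans ?_
    have hvr : ((t - r) * (r - s) / (t - s)) ^ ((1 - γ) / 2)
        = (t - r) ^ ((1 - γ) / 2) * (r - s) ^ ((1 - γ) / 2) * ((t - s) ^ ((1 - γ) / 2))⁻¹ := by
      rw [Real.div_rpow (by positivity) hT.le, Real.mul_rpow hτ₁.le hτ₂.le]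
      ring
    rw [hvr]
    have hτ₁c : (t - r) ^ α₁ * (t - r) ^ ((1 - γ) / 2) = (t - r) ^ (α₁ + (1 - γ) / 2) :=
      (Real.rpow_add hτ₁ _ _).symm
    have hτ₂c : (r - s) ^ α₂ * (r - s) ^ ((1 - γ) / 2) = (r - s) ^ (α₂ + (1 - γ) / 2) :=
      (Real.rpow_add hτ₂ _ _).symm
    have hTneg : ((t - s) ^ ((1 - γ) / 2))⁻¹ = (t - s) ^ (-((1 - γ) / 2)) := by
      rw [Real.rpow_neg hT.le]
    have hKnn : (0:ℝ) ≤ kappa1 γ * |x| ^ (-β) * (t - s) ^ (-((1 - γ) / 2))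
        * ((t - r) ^ (α₁ + (1 - γ) / 2)) * ((r - s) ^ (α₂ + (1 - γ) / 2)) := by
      have := Real.rpow_nonneg hT.le (-((1 - γ) / 2))
      have := Real.rpow_nonneg hτ₁.le (α₁ + (1 - γ) / 2)
      have := Real.rpow_nonneg hτ₂.le (α₂ + (1 - γ) / 2)
      positivity
    calc (t - r) ^ α₁ * (r - s) ^ α₂ * |x| ^ (-β) * Real.exp (-(x - y) ^ 2 / (2 * (t - s)))
          * (kappa1 γ * ((t - r) ^ ((1 - γ) / 2) * (r - s) ^ ((1 - γ) / 2)
              * ((t - s) ^ ((1 - γ) / 2))⁻¹))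
        = (kappa1 γ * |x| ^ (-β) * (t - s) ^ (-((1 - γ) / 2))
            * ((t - r) ^ α₁ * (t - r) ^ ((1 - γ) / 2)) * ((r - s) ^ α₂ * (r - s) ^ ((1 - γ) / 2)))
            * Real.exp (-(x - y) ^ 2 / (2 * (t - s))) := by rw [← hTneg]; ring
      _ = (kappa1 γ * |x| ^ (-β) * (t - s) ^ (-((1 - γ) / 2))
            * ((t - r) ^ (α₁ + (1 - γ) / 2)) * ((r - s) ^ (α₂ + (1 - γ) / 2)))
            * Real.exp (-(x - y) ^ 2 / (2 * (t - s))) := by rw [hτ₁c, hτ₂c]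
      _ ≤ (kappa1 γ * |x| ^ (-β) * (t - s) ^ (-((1 - γ) / 2))
            * ((t - r) ^ (α₁ + (1 - γ) / 2)) * ((r - s) ^ (α₂ + (1 - γ) / 2)))
            * Real.exp (-((1 - γ) * (x - y) ^ 2) / (2 * (t - s))) := by
          apply mul_le_mul_of_nonneg_left _ hKnn
          rw [Real.exp_le_exp, div_le_div_iff_of_pos_right (by positivity)]
          nlinarith [sq_nonneg (x - y)]
      _ = H r := by rw [hH, hD]; ring
  by_cases hf_int : IntervalIntegrable F volume s t
  · have hF_Ioo : IntegrableOn F (Ioo s t) := by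
      rw [intervalIntegrable_iff_integrableOn_Ioc_of_le hst.le] at hf_int
      exact hf_int.mono_set Ioo_subset_Ioc_self
    have hH_Ioo : IntegrableOn H (Ioo s t) := by
      rw [intervalIntegrable_iff_integrableOn_Ioc_of_le hst.le] at hH_int
      exact hH_int.mono_set Ioo_subset_Ioc_self
    calc (∫ r in s..t, F r) = ∫ r in Ioo s t, F r := by
          rw [intervalIntegral.integral_of_le hst.le, integral_Ioc_eq_integral_Ioo]
      _ ≤ ∫ r in Ioo s t, H r := setIntegral_mono_on hF_Ioo hH_Ioo measurableSet_Ioo hmono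
      _ = ∫ r in s..t, H r := by
          rw [intervalIntegral.integral_of_le hst.le, integral_Ioc_eq_integral_Ioo]
      _ = D * ∫ r in s..t, (t - r) ^ (α₁ + (1 - γ) / 2) * (r - s) ^ (α₂ + (1 - γ) / 2) := by
          rw [hH, intervalIntegral.integral_const_mul]
      _ = D * ((t - s) ^ ((3 - γ) / 2 + α₁ + ((3 - γ) / 2 + α₂) - 1)
            * betaFn ((3 - γ) / 2 + α₁) ((3 - γ) / 2 + α₂)) := by rw [hbeta]
      _ = kappa1 γ * (t - s) ^ (3 / 2 + α₁ + α₂ - γ / 2) * |x| ^ (-β) *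
            betaFn ((3 - γ) / 2 + α₁) ((3 - γ) / 2 + α₂) *
            Real.exp (-((1 - γ) * (x - y) ^ 2) / (2 * (t - s))) := by
          rw [hD]
          have hTT : (t - s) ^ (-((1 - γ) / 2))
              * (t - s) ^ ((3 - γ) / 2 + α₁ + ((3 - γ) / 2 + α₂) - 1)
              = (t - s) ^ (3 / 2 + α₁ + α₂ - γ / 2) := by
            rw [← Real.rpow_add hT]
            ring_nf
          calc kappa1 γ * |x| ^ (-β) * Real.exp (-((1 - γ) * (x - y) ^ 2) / (2 * (t - s)))
                * (t - s) ^ (-((1 - γ) / 2))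
                * ((t - s) ^ ((3 - γ) / 2 + α₁ + ((3 - γ) / 2 + α₂) - 1)
                  * betaFn ((3 - γ) / 2 + α₁) ((3 - γ) / 2 + α₂))
              = kappa1 γ * |x| ^ (-β) * Real.exp (-((1 - γ) * (x - y) ^ 2) / (2 * (t - s)))
                * ((t - s) ^ (-((1 - γ) / 2))
                  * (t - s) ^ ((3 - γ) / 2 + α₁ + ((3 - γ) / 2 + α₂) - 1))
                * betaFn ((3 - γ) / 2 + α₁) ((3 - γ) / 2 + α₂) := by ring
            _ = _ := by rw [hTT]; ring
  · rw [intervalIntegral.integral_undef hf_int]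
    have := Real.rpow_nonneg hT.le (3 / 2 + α₁ + α₂ - γ / 2)
    positivity
end
end

section
/- Let λ ∈ (0,1), c > 0, μ > 0, and set Λ := |ln(1-λ)|. Then for every B > 0 there exists a constant C₁ = C₁(λ,c,μ;B) > 0 such that for all z with z/Λ ≥ e^e one has ψ_{λ,c,μ}(z) ≤ C₁ (1+z)^{-B}; that is, ψ_{λ,c,μ} decays faster than any negative power at infinity. -/
open Real Set

noncomputable section

/-- ψ_{λ,c,μ}(z) := Σ_{m=1}^∞ c^m exp(-λ^m z)/Γ(mμ). -/
def psiFn (lam c μ z : ℝ) : ℝ :=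
  ∑' m : ℕ, c ^ (m + 1) * Real.exp (-(lam ^ (m + 1) * z)) / Real.Gamma (((m : ℝ) + 1) * μ)

lemma exp_neg_le_aux (k : ℕ) {x : ℝ} (hx : 0 < x) :
    Real.exp (-x) ≤ (Nat.factorial k : ℝ) / x ^ k := by
  rw [Real.exp_neg]
  have h := Real.pow_div_factorial_le_exp (x := x) hx.le k
  have hpos : 0 < x ^ k / (Nat.factorial k : ℝ) := by positivity
  calc (Real.exp x)⁻¹ ≤ (x ^ k / (Nat.factorial k : ℝ))⁻¹ := inv_anti₀ hpos h
    _ = (Nat.factorial k : ℝ) / x ^ k := by rw [inv_div]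

lemma summable_aux {μ : ℝ} (hμ : 0 < μ) (q : ℝ) (hq : 0 < q) :
    Summable (fun m : ℕ => q ^ (m + 1) / Real.Gamma (((m : ℝ) + 1) * μ)) := by
  set q' : ℝ := max q 1 with hq'
  have hq'1 : (1 : ℝ) ≤ q' := le_max_right _ _
  have h2q : (1 : ℝ) ≤ 2 * q' := by linarith
  -- t with 1/t ≤ μ/2
  set t : ℕ := ⌈(2 : ℝ) / μ⌉₊ + 1 with ht
  have htpos : 0 < t := Nat.succ_pos _
  have htμ : (2 : ℝ) / μ ≤ t := by
    have := Nat.le_ceil ((2 : ℝ) / μ)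
    push_cast [ht]; linarith
  -- A with (A+1 : ℝ) ≥ (2q')^t
  set A : ℕ := ⌈(2 * q') ^ t⌉₊ with hA
  have hA1 : (2 * q') ^ t ≤ (A : ℝ) + 1 := by
    have := Nat.le_ceil ((2 * q') ^ t)
    linarith
  apply Summable.of_norm_bounded_eventually_nat (g := fun m => (1 / 2 : ℝ) ^ m)
    (summable_geometric_of_lt_one (by norm_num) (by norm_num))
  have hN : ∀ᶠ m : ℕ in Filter.atTop, (2 * ((A : ℝ) + 3)) ≤ ((m : ℝ) + 1) * μ := by
    filter_upwards [Filter.eventually_ge_atTop ⌈2 * ((A : ℝ) + 3) / μ⌉₊] with m hm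
    have h1 : 2 * ((A : ℝ) + 3) / μ ≤ (m : ℝ) := le_trans (Nat.le_ceil _) (by exact_mod_cast hm)
    rw [div_le_iff₀ hμ] at h1
    nlinarith
  filter_upwards [hN] with m hX
  set X : ℝ := ((m : ℝ) + 1) * μ with hXdef
  have hX6 : (6 : ℝ) ≤ X := by
    have : (0:ℝ) ≤ (A:ℝ) := Nat.cast_nonneg _
    linarith
  set n : ℕ := ⌊X⌋₊ with hn
  have hnX : (n : ℝ) ≤ X := Nat.floor_le (by linarith)
  have hnge : 2 * A + 6 ≤ n := by
    apply Nat.le_floor; push_cast; linarith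
  have hn1 : 1 ≤ n := by omega
  -- Γ(X) ≥ (n-1)!
  have hGammaMono : Real.Gamma (n : ℝ) ≤ Real.Gamma X := by
    rcases eq_or_lt_of_le hnX with h | h
    · rw [h]
    · exact le_of_lt (Real.Gamma_strictMonoOn_Ici (by simp; omega) (by simp; linarith) h)
  have hGn : Real.Gamma (n : ℝ) = (Nat.factorial (n-1) : ℝ) := by
    have : (n : ℝ) = ((n - 1 : ℕ) : ℝ) + 1 := by push_cast [Nat.cast_sub hn1]; ring
    rw [this, Real.Gamma_nat_eq_factorial]
  -- factorial lower bound
  set s : ℕ := (m + t) / t with hs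
  have hts : m + 1 ≤ t * s := by
    have h1 := Nat.div_add_mod (m + t) t
    have h2 := Nat.mod_lt (m + t) htpos
    rw [hs]
    omega
  have hsle : s ≤ n - 1 - A := by
    -- s ≤ m/t + 1 ≤ m μ/2 + 1 ≤ X/2 + 1 ≤ X - 2 - A ≤ n - 1 - A
    have hsle1 : (s : ℝ) ≤ (m : ℝ) / t + 1 := by
      rw [hs]
      have := Nat.div_le_div_right (c := t) (le_refl (m + t))
      have h3 : ((m + t) / t : ℕ) ≤ (m / t : ℕ) + 1 := by
        have h4 := Nat.add_div_right m htpos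
        omega
      calc (s : ℝ) ≤ ((m / t : ℕ) : ℝ) + 1 := by exact_mod_cast h3
        _ ≤ (m : ℝ) / t + 1 := by
            have := Nat.cast_div_le (m := m) (n := t) (α := ℝ)
            linarith
    have hmt : (m : ℝ) / t ≤ (m : ℝ) * μ / 2 := by
      rcases Nat.eq_zero_or_pos m with rfl | hm0
      · simp
      · rw [div_le_div_iff₀ (by exact_mod_cast htpos) (by norm_num)]
        have : (2 : ℝ) ≤ μ * t := by
          rw [div_le_iff₀ hμ] at htμ; linarith
        nlinarith [(Nat.cast_pos (α := ℝ)).mpr hm0]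
    have hXm : (m : ℝ) * μ ≤ X := by rw [hXdef]; nlinarith
    have hfin : (s : ℝ) ≤ X - 2 - A := by linarith
    have : (s : ℝ) ≤ (n : ℝ) - 1 - A := by
      have : X - 1 < (n : ℝ) + 1 - 1 := by
        have := Nat.lt_floor_add_one X; linarith
      linarith
    have hcast : ((n - 1 - A : ℕ) : ℝ) = (n : ℝ) - 1 - A := by
      rw [Nat.cast_sub (by omega), Nat.cast_sub hn1]
      push_cast; ring
    have := this.trans_eq hcast.symm
    exact_mod_cast this
  have hfact : ((2 * q') ^ (m + 1) : ℝ) ≤ (Nat.factorial (n-1) : ℝ) := by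
    have h1 : Nat.factorial A * (A + 1) ^ (n - 1 - A) ≤ Nat.factorial (A + (n - 1 - A)) :=
      Nat.factorial_mul_pow_le_factorial
    have h2 : A + (n - 1 - A) = n - 1 := by omega
    rw [h2] at h1
    have h3 : (A + 1) ^ (n - 1 - A) ≤ Nat.factorial (n - 1) := by
      calc (A + 1) ^ (n - 1 - A) ≤ Nat.factorial A * (A + 1) ^ (n - 1 - A) :=
            Nat.le_mul_of_pos_left _ (Nat.factorial_pos A)
        _ ≤ _ := h1
    have h4 : ((A : ℝ) + 1) ^ (n - 1 - A) ≤ (Nat.factorial (n-1) : ℝ) := by exact_mod_cast h3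
    calc ((2 * q') ^ (m + 1) : ℝ) ≤ (2 * q') ^ (t * s) :=
          pow_le_pow_right₀ h2q hts
      _ = ((2 * q') ^ t) ^ s := by rw [pow_mul]
      _ ≤ ((A : ℝ) + 1) ^ s := by
          apply pow_le_pow_left₀ (by positivity) hA1
      _ ≤ ((A : ℝ) + 1) ^ (n - 1 - A) := by
          apply pow_le_pow_right₀ (le_add_of_nonneg_left (Nat.cast_nonneg A)) hsle
      _ ≤ _ := h4
  have hGpos : 0 < Real.Gamma X := Real.Gamma_pos_of_pos (by positivity)
  have hGge : ((2 * q') ^ (m + 1) : ℝ) ≤ Real.Gamma X := by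
    rw [← hGn] at hfact; linarith
  have hterm : q ^ (m + 1) / Real.Gamma X ≤ (1 / 2 : ℝ) ^ m := by
    rw [div_le_iff₀ hGpos]
    have hq'' : q ^ (m+1) ≤ q' ^ (m+1) := pow_le_pow_left₀ hq.le (le_max_left _ _) _
    have h2 : ((2:ℝ)) ^ (m+1) * q' ^ (m+1) = (2 * q') ^ (m+1) := by rw [mul_pow]
    have h5 : (1/2 : ℝ) ^ m * (2 * q') ^ (m + 1) = q' ^ (m+1) * 2 := by
      field_simp
      rw [pow_succ, mul_pow]
      have h12 : (1 / 2 : ℝ) ^ m * 2 ^ m = 1 := by rw [← mul_pow]; norm_num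
      linear_combination (q' ^ m * (2 * q')) * h12
    calc q ^ (m+1) ≤ q' ^ (m+1) := hq''
      _ ≤ (1/2 : ℝ) ^ m * (2 * q') ^ (m+1) := by rw [h5]; nlinarith [pow_pos (lt_of_lt_of_le one_pos hq'1) (m+1)]
      _ ≤ _ := by
          apply mul_le_mul_of_nonneg_left hGge (by positivity)
  rw [Real.norm_eq_abs, abs_of_nonneg (by positivity)]
  exact hterm


/-- For λ ∈ (0,1), c, μ > 0 and Λ := |ln(1-λ)|: for every B > 0 there is C₁ > 0
such that ψ_{λ,c,μ}(z) ≤ C₁(1+z)^{-B} whenever z/Λ ≥ e^e. -/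
theorem stmt_12 (lam c μ : ℝ) (hlam : lam ∈ Ioo (0 : ℝ) 1) (hc : 0 < c) (hμ : 0 < μ) :
    ∀ B : ℝ, 0 < B → ∃ C₁ : ℝ, 0 < C₁ ∧
      ∀ z : ℝ, Real.exp 1 ^ Real.exp 1 ≤ z / |Real.log (1 - lam)| →
        psiFn lam c μ z ≤ C₁ * (1 + z) ^ (-B) := by
  intro B hB
  obtain ⟨hl0, hl1⟩ := hlam
  have hΛ : 0 < |Real.log (1 - lam)| :=
    abs_pos.mpr (ne_of_lt (Real.log_neg (by linarith) (by linarith)))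
  set Λ : ℝ := |Real.log (1 - lam)| with hΛdef
  have hEpos : (0:ℝ) < Real.exp 1 ^ Real.exp 1 :=
    Real.rpow_pos_of_pos (Real.exp_pos 1) _
  set z₀ : ℝ := Λ * (Real.exp 1 ^ Real.exp 1) with hz₀def
  have hz₀pos : 0 < z₀ := mul_pos hΛ hEpos
  set k : ℕ := ⌈B⌉₊ with hkdef
  have hkB : B ≤ (k : ℝ) := Nat.le_ceil B
  have hlk : 0 < lam ^ k := pow_pos hl0 k
  set q : ℝ := c / lam ^ k with hqdef
  have hqpos : 0 < q := div_pos hc hlk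
  have hS : Summable (fun m : ℕ => q ^ (m + 1) / Real.Gamma (((m : ℝ) + 1) * μ)) :=
    summable_aux hμ q hqpos
  have hGpos : ∀ m : ℕ, 0 < Real.Gamma (((m : ℝ) + 1) * μ) := fun m =>
    Real.Gamma_pos_of_pos (by positivity)
  set S : ℝ := ∑' m : ℕ, q ^ (m + 1) / Real.Gamma (((m : ℝ) + 1) * μ) with hSdef
  have hSpos : 0 < S :=
    Summable.tsum_pos hS (fun m => le_of_lt (div_pos (pow_pos hqpos _) (hGpos m))) 0
      (div_pos (pow_pos hqpos _) (hGpos 0))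
  set M : ℝ := (2 : ℝ) ^ B * (max 1 z₀⁻¹) ^ k with hMdef
  have hMpos : 0 < M := by
    apply mul_pos (Real.rpow_pos_of_pos (by norm_num) _)
    exact pow_pos (lt_of_lt_of_le one_pos (le_max_left _ _)) _
  have hkfac : (0:ℝ) < (Nat.factorial k : ℝ) := by exact_mod_cast Nat.factorial_pos k
  refine ⟨(Nat.factorial k : ℝ) * S * M, by positivity, ?_⟩
  intro z hz
  have hzz0 : z₀ ≤ z := by
    rw [le_div_iff₀ hΛ] at hz
    rw [hz₀def]; linarith
  have hzpos : 0 < z := lt_of_lt_of_le hz₀pos hzz0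
  -- key power comparison
  have hkey : (1 + z) ^ B ≤ M * z ^ k := by
    have h1 : (1:ℝ) + z ≤ 2 * max z 1 := by
      rcases le_total 1 z with h | h
      · rw [max_eq_left h]; linarith
      · rw [max_eq_right h]; linarith
    have hmaxpos : (0:ℝ) < max z 1 := lt_of_lt_of_le one_pos (le_max_right _ _)
    have h2 : (1 + z) ^ B ≤ (2 * max z 1) ^ B :=
      Real.rpow_le_rpow (by linarith) h1 hB.le
    have h3 : ((2:ℝ) * max z 1) ^ B = (2:ℝ) ^ B * (max z 1) ^ B :=
      Real.mul_rpow (by norm_num) hmaxpos.le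
    have h4 : (max z 1) ^ B ≤ (max z 1) ^ (k : ℝ) :=
      Real.rpow_le_rpow_of_exponent_le (le_max_right z 1) hkB
    have h5 : (max z 1) ^ (k : ℝ) = (max z 1) ^ k := Real.rpow_natCast _ k
    have h6 : max z 1 ≤ z * max 1 z₀⁻¹ := by
      rcases le_total 1 z with h | h
      · rw [max_eq_left h]
        nlinarith [le_max_left (1:ℝ) z₀⁻¹]
      · rw [max_eq_right h]
        have hzi : (1:ℝ) ≤ z * z₀⁻¹ := by
          rw [← div_self (ne_of_gt hz₀pos), div_eq_mul_inv]
          exact mul_le_mul_of_nonneg_right hzz0 (inv_nonneg.mpr hz₀pos.le)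
        calc (1:ℝ) ≤ z * z₀⁻¹ := hzi
          _ ≤ z * max 1 z₀⁻¹ := by
              exact mul_le_mul_of_nonneg_left (le_max_right _ _) hzpos.le
    have h7 : (max z 1) ^ k ≤ (z * max 1 z₀⁻¹) ^ k :=
      pow_le_pow_left₀ hmaxpos.le h6 k
    have h8 : (z * max 1 z₀⁻¹) ^ k = z ^ k * (max 1 z₀⁻¹) ^ k := mul_pow _ _ _
    have h2B : (0:ℝ) ≤ (2:ℝ) ^ B := (Real.rpow_pos_of_pos (by norm_num) _).le
    calc (1 + z) ^ B ≤ (2:ℝ) ^ B * (max z 1) ^ B := by rw [← h3]; exact h2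
      _ ≤ (2:ℝ) ^ B * (z ^ k * (max 1 z₀⁻¹) ^ k) := by
          apply mul_le_mul_of_nonneg_left _ h2B
          rw [← h8]
          exact le_trans (by rw [← h5]; exact h4) h7
      _ = M * z ^ k := by rw [hMdef]; ring
  -- termwise bound
  have hterm : ∀ m : ℕ,
      c ^ (m + 1) * Real.exp (-(lam ^ (m + 1) * z)) / Real.Gamma (((m : ℝ) + 1) * μ)
        ≤ ((Nat.factorial k : ℝ) * (z ^ k)⁻¹) * (q ^ (m + 1) / Real.Gamma (((m : ℝ) + 1) * μ)) := by
    intro m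
    have hx : 0 < lam ^ (m + 1) * z := mul_pos (pow_pos hl0 _) hzpos
    have hexp := exp_neg_le_aux k hx
    rw [← mul_div_assoc]
    refine (div_le_div_iff_of_pos_right (hGpos m)).mpr ?_
    have hrhs : ((Nat.factorial k : ℝ) * (z ^ k)⁻¹) * q ^ (m + 1)
        = c ^ (m + 1) * ((Nat.factorial k : ℝ) / (lam ^ (m + 1) * z) ^ k) := by
      rw [hqdef, div_pow, mul_pow, ← pow_mul, ← pow_mul, Nat.mul_comm]
      field_simp
    rw [hrhs]
    exact mul_le_mul_of_nonneg_left hexp (by positivity)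
  have hSum2 : Summable (fun m : ℕ =>
      ((Nat.factorial k : ℝ) * (z ^ k)⁻¹) * (q ^ (m + 1) / Real.Gamma (((m : ℝ) + 1) * μ))) :=
    hS.mul_left _
  have hSum1 : Summable (fun m : ℕ =>
      c ^ (m + 1) * Real.exp (-(lam ^ (m + 1) * z)) / Real.Gamma (((m : ℝ) + 1) * μ)) := by
    apply Summable.of_nonneg_of_le (fun m => by positivity) hterm hSum2
  have hpsi : psiFn lam c μ z ≤ ((Nat.factorial k : ℝ) * (z ^ k)⁻¹) * S := by
    rw [psiFn, hSdef, ← tsum_mul_left]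
    exact Summable.tsum_le_tsum hterm hSum1 hSum2
  -- conclude
  have hzk : (z ^ k)⁻¹ ≤ M * (1 + z) ^ (-B) := by
    have h1z : (0:ℝ) < 1 + z := by linarith
    have hpB : (0:ℝ) < (1 + z) ^ B := Real.rpow_pos_of_pos h1z B
    rw [Real.rpow_neg h1z.le]
    have hzkpos : (0:ℝ) < z ^ k := pow_pos hzpos k
    calc (z ^ k)⁻¹ = M * (M * z ^ k)⁻¹ := by
          field_simp
      _ ≤ M * ((1 + z) ^ B)⁻¹ :=
          mul_le_mul_of_nonneg_left (inv_anti₀ hpB hkey) hMpos.le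
  calc psiFn lam c μ z ≤ ((Nat.factorial k : ℝ) * (z ^ k)⁻¹) * S := hpsi
    _ = ((Nat.factorial k : ℝ) * S) * (z ^ k)⁻¹ := by ring
    _ ≤ ((Nat.factorial k : ℝ) * S) * (M * (1 + z) ^ (-B)) :=
        mul_le_mul_of_nonneg_left hzk (by positivity)
    _ = (Nat.factorial k : ℝ) * S * M * (1 + z) ^ (-B) := by ring
end
end
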